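/- arXiv:2306.08706 — 3 statements merged into one kernel-verified Lean document; each statement's English description precedes it below -/
import Mathlib

section
/- Fix T > 0, t₀ ∈ (0,∞) and a probability measure μ₀ on ℝ^d with finite second moment. For every nonempty compact set Φ ⊂ C([0,T]; ℝ^d) (supremum norm) there exists φ* ∈ Φ such that J_{t₀,μ₀}(φ*) = inf_{φ∈Φ} J_{t₀,μ₀}(φ), where the infimum is taken in [0,∞]. -/
open MeasureTheory Set Filter
open scoped ENNReal

noncomputable section

abbrev Ed (d : ℕ) : Type := EuclideanSpace ℝ (Fin d)

/-- `f` is absolutely continuous on `[0,T]` with (integrable) derivative `f'`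
whose norm is square integrable. -/
def HasL2Deriv {d : ℕ} (T : ℝ) (f f' : ℝ → Ed d) : Prop :=
  IntervalIntegrable f' volume 0 T ∧
  IntervalIntegrable (fun s => ‖f' s‖ ^ 2) volume 0 T ∧
  ∀ t ∈ Icc (0:ℝ) T, f t = f 0 + ∫ s in (0:ℝ)..t, f' s

/-- The drift mismatch appearing in the rate function of the generalized
self-interacting diffusion with initial data `(t₀, μ₀)`. -/
def drift {d : ℕ} (V F : Ed d → ℝ) (t₀ : ℝ) (μ₀ : Measure (Ed d))
    (f f' : ℝ → Ed d) (t : ℝ) : Ed d :=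
  f' t + gradient V (f t) + (t₀ / (t₀ + t)) • (∫ u, gradient F (f t - u) ∂μ₀)
    + (1 / (t₀ + t)) • (∫ s in (0:ℝ)..t, gradient F (f t - f s))

/-- The (unnormalized) rate function `J_{t₀,μ₀}` of the generalized self-interacting
diffusion, with values in `[0,∞]`. -/
noncomputable def Jfun {d : ℕ} (V F : Ed d → ℝ) (T t₀ : ℝ) (μ₀ : Measure (Ed d))
    (f : ℝ → Ed d) : ℝ≥0∞ :=
  ⨅ (f' : ℝ → Ed d) (_ : HasL2Deriv T f f'),
    ENNReal.ofReal (∫ t in (0:ℝ)..T, ‖drift V F t₀ μ₀ f f' t‖ ^ 2)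


open scoped Topology RealInnerProductSpace

namespace Stmt8Aux

variable {d : ℕ}

/-- Mean-field term. -/
def Wint (F : Ed d → ℝ) (μ₀ : Measure (Ed d)) (x : Ed d) : Ed d :=
  ∫ u, gradient F (x - u) ∂μ₀

/-- Interaction term. -/
def Gint (F : Ed d → ℝ) (f : ℝ → Ed d) (t : ℝ) : Ed d :=
  ∫ s in (0:ℝ)..t, gradient F (f t - f s)

/-- Drift remainder. -/
def bfun (V F : Ed d → ℝ) (t₀ : ℝ) (μ₀ : Measure (Ed d)) (f : ℝ → Ed d) (t : ℝ) : Ed d :=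
  gradient V (f t) + (t₀ / (t₀ + t)) • Wint F μ₀ (f t) + (1 / (t₀ + t)) • Gint F f t

lemma drift_eq (V F : Ed d → ℝ) (t₀ : ℝ) (μ₀ : Measure (Ed d)) (f f' : ℝ → Ed d) (t : ℝ) :
    drift V F t₀ μ₀ f f' t = f' t + bfun V F t₀ μ₀ f t := by
  unfold drift bfun Wint Gint; abel

lemma integrable_norm_mu (μ₀ : Measure (Ed d)) [IsProbabilityMeasure μ₀]
    (hμ₀ : Integrable (fun u => ‖u‖ ^ 2) μ₀) : Integrable (fun u : Ed d => ‖u‖) μ₀ := by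
  refine Integrable.mono' (g := fun u => 1 + ‖u‖^2) ((integrable_const 1).add hμ₀)
    (continuous_norm.aestronglyMeasurable) (Eventually.of_forall fun u => ?_)
  rw [Real.norm_eq_abs, abs_of_nonneg (norm_nonneg u)]
  nlinarith [norm_nonneg u, sq_nonneg (‖u‖ - 1)]

lemma gradient_cont {F : Ed d → ℝ} (hF : ContDiff ℝ 2 F) : Continuous (gradient F) := by
  have h1 : Continuous (fderiv ℝ F) := hF.continuous_fderiv (by norm_num)
  exact (InnerProductSpace.toDual ℝ (Ed d)).symm.continuous.comp h1

/-- norm of gradient linear growth -/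
lemma grad_norm_le {F : Ed d → ℝ} {LF : ℝ}
    (hFlip : ∀ x y : Ed d, ‖gradient F x - gradient F y‖ ≤ LF * ‖x - y‖) (x : Ed d) :
    ‖gradient F x‖ ≤ ‖gradient F 0‖ + LF * ‖x‖ := by
  have h := hFlip x 0
  simp only [sub_zero] at h
  have := norm_sub_norm_le (gradient F x) (gradient F 0)
  linarith

section W

variable {F : Ed d → ℝ} (hF : ContDiff ℝ 2 F) {LF : ℝ}
  (hFlip : ∀ x y : Ed d, ‖gradient F x - gradient F y‖ ≤ LF * ‖x - y‖)
  {μ₀ : Measure (Ed d)} [IsProbabilityMeasure μ₀]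
  (hμ₀ : Integrable (fun u => ‖u‖ ^ 2) μ₀)

include hF hFlip hμ₀

lemma Wint_integrable (x : Ed d) : Integrable (fun u => gradient F (x - u)) μ₀ := by
  refine Integrable.mono' (g := fun u => ‖gradient F x‖ + LF * ‖u‖)
    ((integrable_const _).add ((integrable_norm_mu μ₀ hμ₀).const_mul LF))
    (((gradient_cont hF).comp (continuous_const.sub continuous_id)).aestronglyMeasurable)
    (Eventually.of_forall fun u => ?_)
  have h := hFlip (x - u) x
  have h2 := norm_sub_norm_le (gradient F (x-u)) (gradient F x)
  rw [show x - u - x = -u by abel, norm_neg] at h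
  linarith

lemma Wint_lip (x y : Ed d) : ‖Wint F μ₀ x - Wint F μ₀ y‖ ≤ LF * ‖x - y‖ := by
  have hx := Wint_integrable hF hFlip hμ₀ x
  have hy := Wint_integrable hF hFlip hμ₀ y
  rw [Wint, Wint, ← integral_sub hx hy]
  calc ‖∫ u, (gradient F (x - u) - gradient F (y - u)) ∂μ₀‖
      ≤ ∫ _u, LF * ‖x - y‖ ∂μ₀ := by
        refine norm_integral_le_of_norm_le (integrable_const _) (Eventually.of_forall fun u => ?_)
        have := hFlip (x - u) (y - u)
        rwa [show x - u - (y - u) = x - y by abel] at this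
    _ = LF * ‖x - y‖ := by simp

lemma Wint_cont : Continuous (Wint F μ₀) := by
  have h : LipschitzWith (Real.toNNReal LF) (Wint F μ₀) := by
    apply LipschitzWith.of_dist_le_mul
    intro x y
    rw [dist_eq_norm, dist_eq_norm]
    exact le_trans (Wint_lip hF hFlip hμ₀ x y)
      (mul_le_mul_of_nonneg_right (Real.le_coe_toNNReal LF) (norm_nonneg _))
  exact h.continuous

lemma Wint_norm_le (x : Ed d) : ‖Wint F μ₀ x‖ ≤ ‖Wint F μ₀ 0‖ + LF * ‖x‖ := by
  have h := Wint_lip hF hFlip hμ₀ x 0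
  simp only [sub_zero] at h
  have := norm_sub_norm_le (Wint F μ₀ x) (Wint F μ₀ 0)
  linarith

end W


section G
variable {F : Ed d → ℝ} (hF : ContDiff ℝ 2 F) {LF : ℝ} (hLF : 0 ≤ LF)
  (hFlip : ∀ x y : Ed d, ‖gradient F x - gradient F y‖ ≤ LF * ‖x - y‖)
  {f : ℝ → Ed d} (hfc : Continuous f) {R : ℝ} (hfR : ∀ t, ‖f t‖ ≤ R)

include hF hLF hFlip hfc hfR in
lemma Gint_cont : Continuous (Gint F f) := by
  set M : ℝ := ‖gradient F 0‖ + LF * (2 * R) with hM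
  have hMnn : ∀ a b : ℝ, ‖gradient F (f a - f b)‖ ≤ M := by
    intro a b
    refine (grad_norm_le hFlip _).trans ?_
    rw [hM]
    have : ‖f a - f b‖ ≤ 2 * R := by
      have := norm_sub_le (f a) (f b); have := hfR a; have := hfR b; linarith
    have := mul_le_mul_of_nonneg_left this hLF
    linarith
  have i1 : ∀ (x t₁ t₂ : ℝ), IntervalIntegrable (fun s => gradient F (f x - f s)) volume t₁ t₂ :=
    fun x t₁ t₂ => ((gradient_cont hF).comp (continuous_const.sub hfc)).intervalIntegrable _ _
  rw [continuous_iff_continuousAt]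
  intro t₂
  have key : ∀ t₁ : ℝ, |t₁ - t₂| ≤ 1 →
      ‖Gint F f t₁ - Gint F f t₂‖ ≤ (|t₂| + 1) * (LF * ‖f t₁ - f t₂‖) + M * |t₁ - t₂| := by
    intro t₁ ht₁
    have hsplit : Gint F f t₁ - Gint F f t₂ =
        (∫ s in (0:ℝ)..t₁, (gradient F (f t₁ - f s) - gradient F (f t₂ - f s)))
          + ∫ s in t₂..t₁, gradient F (f t₂ - f s) := by
      rw [intervalIntegral.integral_sub (i1 t₁ 0 t₁) (i1 t₂ 0 t₁)]
      have hadj := intervalIntegral.integral_add_adjacent_intervals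
        (a := (0:ℝ)) (b := t₂) (c := t₁) (i1 t₂ 0 t₂) (i1 t₂ t₂ t₁)
      unfold Gint
      rw [← hadj]; abel
    rw [hsplit]
    have h1 : ‖∫ s in (0:ℝ)..t₁, (gradient F (f t₁ - f s) - gradient F (f t₂ - f s))‖
        ≤ (LF * ‖f t₁ - f t₂‖) * |t₁ - 0| := by
      refine intervalIntegral.norm_integral_le_of_norm_le_const fun s _ => ?_
      have := hFlip (f t₁ - f s) (f t₂ - f s)
      rwa [show f t₁ - f s - (f t₂ - f s) = f t₁ - f t₂ by abel] at this
    have h2 : ‖∫ s in t₂..t₁, gradient F (f t₂ - f s)‖ ≤ M * |t₁ - t₂| :=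
      intervalIntegral.norm_integral_le_of_norm_le_const fun s _ => hMnn _ _
    refine (norm_add_le _ _).trans ?_
    have h3 : |t₁ - 0| ≤ |t₂| + 1 := by
      rw [sub_zero]
      calc |t₁| = |t₂ + (t₁ - t₂)| := by ring_nf
        _ ≤ |t₂| + |t₁ - t₂| := abs_add_le _ _
        _ ≤ |t₂| + 1 := by linarith
    have hnn : 0 ≤ LF * ‖f t₁ - f t₂‖ := mul_nonneg hLF (norm_nonneg _)
    nlinarith [mul_le_mul_of_nonneg_left h3 hnn]
  rw [ContinuousAt, tendsto_iff_norm_sub_tendsto_zero]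
  have hb1 : Tendsto (fun t₁ => ‖f t₁ - f t₂‖) (𝓝 t₂) (𝓝 0) := by
    have h : Tendsto (fun t₁ => f t₁ - f t₂) (𝓝 t₂) (𝓝 (f t₂ - f t₂)) :=
      (hfc.tendsto t₂).sub tendsto_const_nhds
    rw [sub_self] at h
    simpa using h.norm
  have hb2 : Tendsto (fun t₁ => |t₁ - t₂|) (𝓝 t₂) (𝓝 0) := by
    have h : Tendsto (fun t₁ : ℝ => t₁ - t₂) (𝓝 t₂) (𝓝 (t₂ - t₂)) :=
      (continuous_id.tendsto t₂).sub tendsto_const_nhds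
    rw [sub_self] at h
    simpa using h.abs
  refine squeeze_zero' (g := fun t₁ => (|t₂| + 1) * (LF * ‖f t₁ - f t₂‖) + M * |t₁ - t₂|)
    (Eventually.of_forall fun t₁ => norm_nonneg _) ?_ ?_
  · have hev : ∀ᶠ t₁ in 𝓝 t₂, |t₁ - t₂| ≤ 1 := by
      have := Metric.closedBall_mem_nhds t₂ (one_pos)
      filter_upwards [this] with t₁ ht₁
      rwa [Metric.mem_closedBall, Real.dist_eq] at ht₁
    filter_upwards [hev] with t₁ ht₁
    exact key t₁ ht₁
  · have := ((hb1.const_mul ((|t₂| + 1) * LF)).add (hb2.const_mul M))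
    simp only [mul_zero, add_zero] at this
    convert this using 2 with t₁
    ring
end G

section B
variable {V F : Ed d → ℝ} (hV : ContDiff ℝ 2 V) (hF : ContDiff ℝ 2 F)
  {LV LF : ℝ} (hLV : 0 ≤ LV) (hLF : 0 ≤ LF)
  (hVlip : ∀ x y : Ed d, ‖gradient V x - gradient V y‖ ≤ LV * ‖x - y‖)
  (hFlip : ∀ x y : Ed d, ‖gradient F x - gradient F y‖ ≤ LF * ‖x - y‖)
  {t₀ : ℝ} (ht₀ : 0 < t₀) {μ₀ : Measure (Ed d)} [IsProbabilityMeasure μ₀]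
  (hμ₀ : Integrable (fun u => ‖u‖ ^ 2) μ₀)
  {T : ℝ} (hT : 0 < T)
  {f : ℝ → Ed d} (hfc : Continuous f) {R : ℝ} (hfR : ∀ t, ‖f t‖ ≤ R)

/-- the uniform bound for `bfun`. -/
def Bc (V F : Ed d → ℝ) (μ₀ : Measure (Ed d)) (LV LF t₀ T R : ℝ) : ℝ :=
  (‖gradient V (0:Ed d)‖ + LV * R) + (‖Wint F μ₀ 0‖ + LF * R)
    + (1 / t₀) * ((‖gradient F (0:Ed d)‖ + LF * (2 * R)) * T)

include hV hF hLF hFlip hfc hfR hμ₀ ht₀ in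
lemma bfun_contOn : ContinuousOn (bfun V F t₀ μ₀ f) (Ici (0:ℝ)) := by
  have hden : ∀ t : ℝ, t ∈ Ici (0:ℝ) → t₀ + t ≠ 0 := fun t ht => by
    have : (0:ℝ) ≤ t := ht; positivity
  have c1 : Continuous fun t => gradient V (f t) := (gradient_cont hV).comp hfc
  have c2 : ContinuousOn (fun t => t₀ / (t₀ + t)) (Ici 0) :=
    continuousOn_const.div ((continuous_const.add continuous_id).continuousOn) hden
  have c3 : Continuous fun t => Wint F μ₀ (f t) := (Wint_cont hF hFlip hμ₀).comp hfc
  have c4 : ContinuousOn (fun t => (1:ℝ) / (t₀ + t)) (Ici 0) :=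
    continuousOn_const.div ((continuous_const.add continuous_id).continuousOn) hden
  have c5 : Continuous (Gint F f) := Gint_cont hF hLF hFlip hfc hfR
  exact ((c1.continuousOn.add (c2.smul c3.continuousOn)).add (c4.smul c5.continuousOn))

include hF hLV hLF hVlip hFlip ht₀ hμ₀ hfR in
lemma bfun_bound {t : ℝ} (ht : t ∈ Icc 0 T) :
    ‖bfun V F t₀ μ₀ f t‖ ≤ Bc V F μ₀ LV LF t₀ T R := by
  have ht0 : (0:ℝ) ≤ t := ht.1
  have htden : 0 < t₀ + t := by positivity
  have p1 : ‖gradient V (f t)‖ ≤ ‖gradient V (0:Ed d)‖ + LV * R := by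
    refine (grad_norm_le hVlip _).trans ?_
    have := mul_le_mul_of_nonneg_left (hfR t) hLV; linarith
  have p2 : ‖(t₀ / (t₀ + t)) • Wint F μ₀ (f t)‖ ≤ ‖Wint F μ₀ 0‖ + LF * R := by
    rw [norm_smul, Real.norm_eq_abs]
    have ha : |t₀ / (t₀ + t)| ≤ 1 := by
      rw [abs_of_pos (by positivity)]
      rw [div_le_one htden]; linarith
    have hb : ‖Wint F μ₀ (f t)‖ ≤ ‖Wint F μ₀ 0‖ + LF * R := by
      refine (Wint_norm_le hF hFlip hμ₀ _).trans ?_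
      have := mul_le_mul_of_nonneg_left (hfR t) hLF; linarith
    calc |t₀ / (t₀ + t)| * ‖Wint F μ₀ (f t)‖ ≤ 1 * (‖Wint F μ₀ 0‖ + LF * R) :=
          mul_le_mul ha hb (norm_nonneg _) zero_le_one
      _ = _ := one_mul _
  have p3 : ‖(1 / (t₀ + t)) • Gint F f t‖
      ≤ (1 / t₀) * ((‖gradient F (0:Ed d)‖ + LF * (2 * R)) * T) := by
    rw [norm_smul, Real.norm_eq_abs]
    set M : ℝ := ‖gradient F (0:Ed d)‖ + LF * (2 * R) with hM
    have hMnn : 0 ≤ M := by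
      rw [hM]; have : 0 ≤ LF * (2 * R) := by
        have h0 := (norm_nonneg (f 0)).trans (hfR 0)
        positivity
      positivity
    have hGb : ‖Gint F f t‖ ≤ M * T := by
      have : ‖Gint F f t‖ ≤ M * |t - 0| := by
        refine intervalIntegral.norm_integral_le_of_norm_le_const fun s _ => ?_
        refine (grad_norm_le hFlip _).trans ?_
        rw [hM]
        have h1 : ‖f t - f s‖ ≤ 2 * R := by
          have := norm_sub_le (f t) (f s); have := hfR t; have := hfR s; linarith
        have := mul_le_mul_of_nonneg_left h1 hLF; linarith
      rw [sub_zero, abs_of_nonneg ht0] at this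
      refine this.trans ?_
      exact mul_le_mul_of_nonneg_left ht.2 hMnn
    have ha : |1 / (t₀ + t)| ≤ 1 / t₀ := by
      rw [abs_of_pos (by positivity)]
      exact one_div_le_one_div_of_le ht₀ (by linarith)
    calc |1 / (t₀ + t)| * ‖Gint F f t‖ ≤ (1/t₀) * (M * T) :=
          mul_le_mul ha hGb (norm_nonneg _) (by positivity)
      _ = _ := by rw [hM]
  calc ‖bfun V F t₀ μ₀ f t‖ ≤ ‖gradient V (f t)‖ + ‖(t₀ / (t₀ + t)) • Wint F μ₀ (f t)‖
        + ‖(1 / (t₀ + t)) • Gint F f t‖ := norm_add₃_le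
    _ ≤ _ := by unfold Bc; linarith

include hF hLV hLF hVlip hFlip ht₀ hμ₀ in
lemma bfun_diff {g : ℝ → Ed d} (hgc : Continuous g) (hfc2 : Continuous f)
    {ε : ℝ} (hfg : ∀ s, ‖f s - g s‖ ≤ ε) {t : ℝ} (ht : t ∈ Icc 0 T) :
    ‖bfun V F t₀ μ₀ f t - bfun V F t₀ μ₀ g t‖
      ≤ (LV + LF + 2 * LF * T / t₀) * ε := by
  have hε : 0 ≤ ε := (norm_nonneg _).trans (hfg 0)
  have ht0 : (0:ℝ) ≤ t := ht.1
  have htden : 0 < t₀ + t := by positivity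
  have e : bfun V F t₀ μ₀ f t - bfun V F t₀ μ₀ g t =
      (gradient V (f t) - gradient V (g t))
      + ((t₀ / (t₀ + t)) • (Wint F μ₀ (f t) - Wint F μ₀ (g t))
      + (1 / (t₀ + t)) • (Gint F f t - Gint F g t)) := by
    unfold bfun; rw [smul_sub, smul_sub]; abel
  rw [e]
  have p1 : ‖gradient V (f t) - gradient V (g t)‖ ≤ LV * ε := by
    refine (hVlip _ _).trans (mul_le_mul_of_nonneg_left (hfg t) hLV)
  have p2 : ‖(t₀ / (t₀ + t)) • (Wint F μ₀ (f t) - Wint F μ₀ (g t))‖ ≤ LF * ε := by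
    rw [norm_smul, Real.norm_eq_abs]
    have ha : |t₀ / (t₀ + t)| ≤ 1 := by
      rw [abs_of_pos (by positivity), div_le_one htden]; linarith
    have hb : ‖Wint F μ₀ (f t) - Wint F μ₀ (g t)‖ ≤ LF * ε :=
      (Wint_lip hF hFlip hμ₀ _ _).trans (mul_le_mul_of_nonneg_left (hfg t) hLF)
    calc |t₀ / (t₀ + t)| * ‖Wint F μ₀ (f t) - Wint F μ₀ (g t)‖ ≤ 1 * (LF * ε) :=
          mul_le_mul ha hb (norm_nonneg _) zero_le_one
      _ = _ := one_mul _
  have p3 : ‖(1 / (t₀ + t)) • (Gint F f t - Gint F g t)‖ ≤ (2 * LF * T / t₀) * ε := by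
    rw [norm_smul, Real.norm_eq_abs]
    have i1 : IntervalIntegrable (fun s => gradient F (f t - f s)) volume 0 t :=
      ((gradient_cont hF).comp (continuous_const.sub hfc2)).intervalIntegrable _ _
    have i2 : IntervalIntegrable (fun s => gradient F (g t - g s)) volume 0 t :=
      ((gradient_cont hF).comp (continuous_const.sub hgc)).intervalIntegrable _ _
    have hGdiff : ‖Gint F f t - Gint F g t‖ ≤ (2 * LF * ε) * t := by
      have hsub : Gint F f t - Gint F g t
          = ∫ s in (0:ℝ)..t, (gradient F (f t - f s) - gradient F (g t - g s)) := by
        unfold Gint; rw [intervalIntegral.integral_sub i1 i2]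
      rw [hsub]
      have := intervalIntegral.norm_integral_le_of_norm_le_const
        (C := 2 * LF * ε) (a := (0:ℝ)) (b := t)
        (f := fun s => gradient F (f t - f s) - gradient F (g t - g s)) ?_
      · rwa [sub_zero, abs_of_nonneg ht0] at this
      · intro s _
        refine (hFlip _ _).trans ?_
        have h1 : ‖f t - f s - (g t - g s)‖ ≤ 2 * ε := by
          have e2 : f t - f s - (g t - g s) = (f t - g t) - (f s - g s) := by abel
          rw [e2]
          have := norm_sub_le (f t - g t) (f s - g s)
          have := hfg t; have := hfg s; linarith
        have := mul_le_mul_of_nonneg_left h1 hLF; linarith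
    have ha : |1 / (t₀ + t)| ≤ 1 / t₀ := by
      rw [abs_of_pos (by positivity)]
      exact one_div_le_one_div_of_le ht₀ (by linarith)
    calc |1 / (t₀ + t)| * ‖Gint F f t - Gint F g t‖ ≤ (1 / t₀) * ((2 * LF * ε) * t) := by
          refine mul_le_mul ha ?_ (norm_nonneg _) (by positivity)
          refine hGdiff.trans (le_refl _)
      _ ≤ (1 / t₀) * ((2 * LF * ε) * T) := by
          refine mul_le_mul_of_nonneg_left ?_ (by positivity)
          exact mul_le_mul_of_nonneg_left ht.2 (by positivity)
      _ = (2 * LF * T / t₀) * ε := by field_simp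
  calc ‖_ + (_ + _)‖ ≤ ‖gradient V (f t) - gradient V (g t)‖
        + (‖(t₀ / (t₀ + t)) • (Wint F μ₀ (f t) - Wint F μ₀ (g t))‖
          + ‖(1 / (t₀ + t)) • (Gint F f t - Gint F g t)‖) :=
        norm_add_le_of_le le_rfl (norm_add_le _ _)
    _ ≤ LV * ε + (LF * ε + (2 * LF * T / t₀) * ε) := by linarith
    _ = _ := by ring
end B

-- cluster helpers
lemma mapClusterPt_eq_limit {α : Type*} [TopologicalSpace α] [T2Space α] {F : Filter ℕ} [F.NeBot]
    {g : ℕ → α} {a b : α} (h : MapClusterPt a F g) (h' : Tendsto g F (𝓝 b)) : a = b := by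
  have h1 : ClusterPt a (Filter.map g F) := h
  exact eq_of_nhds_neBot (NeBot.mono h1.neBot (inf_le_inf_left _ (h' : Filter.map g F ≤ 𝓝 b)))

lemma mapClusterPt_le {F : Filter ℕ} [F.NeBot] {g : ℕ → ℝ} {a c : ℝ}
    (h : MapClusterPt a F g) (hle : ∀ k, g k ≤ c) : a ≤ c := by
  have h1 : Filter.map g F ≤ 𝓟 (Iic c) := by
    rw [le_principal_iff]; exact mem_map.2 (Eventually.of_forall fun k => hle k)
  have h2 : ClusterPt a (𝓟 (Iic c)) := ClusterPt.mono h h1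
  have h3 := mem_closure_iff_clusterPt.2 h2
  rwa [closure_Iic] at h3

lemma mapClusterPt_add_tendsto {F : Filter ℕ} [F.NeBot] {g h : ℕ → ℝ} {a b : ℝ}
    (hg : MapClusterPt a F g) (hh : Tendsto h F (𝓝 b)) :
    MapClusterPt (a + b) F (fun k => g k + h k) := by
  rw [mapClusterPt_iff_frequently] at hg ⊢
  intro s hs
  obtain ⟨ε, hε, hball⟩ := Metric.mem_nhds_iff.1 hs
  have h1 : ∃ᶠ k in F, g k ∈ Metric.ball a (ε/2) := hg _ (Metric.ball_mem_nhds _ (by linarith))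
  have h2 : ∀ᶠ k in F, h k ∈ Metric.ball b (ε/2) := hh (Metric.ball_mem_nhds _ (by linarith))
  refine (h1.and_eventually h2).mono ?_
  rintro k ⟨hk1, hk2⟩
  apply hball
  simp only [Metric.mem_ball, Real.dist_eq] at *
  have h3 : |g k + h k - (a + b)| ≤ |g k - a| + |h k - b| := by
    rw [show g k + h k - (a + b) = (g k - a) + (h k - b) by ring]; exact abs_add_le _ _
  linarith

lemma norm_sq_L2 {d : ℕ} {μ : Measure ℝ} (w : MeasureTheory.Lp (Ed d) 2 μ) :
    ‖w‖ ^ 2 = ∫ a, ‖w a‖ ^ 2 ∂μ := by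
  rw [← real_inner_self_eq_norm_sq, L2.inner_def]
  congr 1; ext a; rw [real_inner_self_eq_norm_sq]

-- weak cluster point machinery
set_option maxHeartbeats 1000000 in
lemma exists_weak_cluster {d : ℕ} {μ : Measure ℝ}
    (u : ℕ → MeasureTheory.Lp (Ed d) 2 μ) {r : ℝ} (hu : ∀ k, ‖u k‖ ≤ r) :
    ∃ v : MeasureTheory.Lp (Ed d) 2 μ,
      ∀ w : MeasureTheory.Lp (Ed d) 2 μ,
        MapClusterPt (⟪v, w⟫) atTop (fun k => ⟪u k, w⟫) := by
  set D : ℕ → WeakDual ℝ (MeasureTheory.Lp (Ed d) 2 μ) := fun k =>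
    StrongDual.toWeakDual (InnerProductSpace.toDual ℝ (MeasureTheory.Lp (Ed d) 2 μ) (u k))
  have hmem : ∀ k, D k ∈ (WeakDual.toStrongDual ⁻¹' Metric.closedBall 0 r) := by
    intro k
    simp only [Set.mem_preimage, Metric.mem_closedBall, dist_zero_right]
    calc ‖WeakDual.toStrongDual (D k)‖ = ‖InnerProductSpace.toDual ℝ (MeasureTheory.Lp (Ed d) 2 μ) (u k)‖ := rfl
      _ = ‖u k‖ := by rw [(InnerProductSpace.toDual ℝ (MeasureTheory.Lp (Ed d) 2 μ)).norm_map]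
      _ ≤ r := hu k
  have hle : Filter.map D atTop ≤ 𝓟 (WeakDual.toStrongDual ⁻¹' Metric.closedBall 0 r) := by
    rw [le_principal_iff]; exact mem_map.2 (Eventually.of_forall hmem)
  obtain ⟨ℓ, _, hℓ⟩ := (WeakDual.isCompact_closedBall (𝕜 := ℝ) 0 r).exists_clusterPt hle
  refine ⟨(InnerProductSpace.toDual ℝ (MeasureTheory.Lp (Ed d) 2 μ)).symm (WeakDual.toStrongDual ℓ), fun w => ?_⟩
  have heval : ContinuousAt (fun x : WeakDual ℝ (MeasureTheory.Lp (Ed d) 2 μ) => x w) ℓ :=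
    (WeakDual.eval_continuous w).continuousAt
  have hmcp : MapClusterPt ℓ atTop D := hℓ
  have h2 : MapClusterPt (ℓ w) atTop ((fun x : WeakDual ℝ (MeasureTheory.Lp (Ed d) 2 μ) => x w) ∘ D) :=
    hmcp.continuousAt_comp heval
  have h3 : ((fun x : WeakDual ℝ (MeasureTheory.Lp (Ed d) 2 μ) => x w) ∘ D) = fun k => ⟪u k, w⟫ := by
    funext k
    show (InnerProductSpace.toDual ℝ (MeasureTheory.Lp (Ed d) 2 μ) (u k)) w = _
    rw [InnerProductSpace.toDual_apply_apply]
  have h4 : ⟪(InnerProductSpace.toDual ℝ (MeasureTheory.Lp (Ed d) 2 μ)).symm (WeakDual.toStrongDual ℓ), w⟫ = ℓ w := by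
    rw [InnerProductSpace.toDual_symm_apply]; rfl
  rw [h4, h3.symm]
  exact h2


set_option maxHeartbeats 2000000 in
lemma core {d : ℕ} {V F : Ed d → ℝ} (hV : ContDiff ℝ 2 V) (hF : ContDiff ℝ 2 F)
    {LV LF : ℝ} (hLV : 0 ≤ LV) (hLF : 0 ≤ LF)
    (hVlip : ∀ x y : Ed d, ‖gradient V x - gradient V y‖ ≤ LV * ‖x - y‖)
    (hFlip : ∀ x y : Ed d, ‖gradient F x - gradient F y‖ ≤ LF * ‖x - y‖)
    {T : ℝ} (hT : 0 < T) {t₀ : ℝ} (ht₀ : 0 < t₀)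
    {μ₀ : Measure (Ed d)} [IsProbabilityMeasure μ₀]
    (hμ₀ : Integrable (fun u => ‖u‖ ^ 2) μ₀)
    (θ : ℕ → C(Icc (0:ℝ) T, Ed d)) (φ : C(Icc (0:ℝ) T, Ed d))
    (hconv : Tendsto θ atTop (𝓝 φ))
    {C : ℝ} (hC : 0 ≤ C) (f' : ℕ → ℝ → Ed d)
    (hd : ∀ k, HasL2Deriv T (fun s => θ k (projIcc 0 T hT.le s)) (f' k))
    (hI : ∀ k, (∫ t in (0:ℝ)..T,
        ‖drift V F t₀ μ₀ (fun s => θ k (projIcc 0 T hT.le s)) (f' k) t‖ ^ 2) ≤ C) :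
    Jfun V F T t₀ μ₀ (fun s => φ (projIcc 0 T hT.le s)) ≤ ENNReal.ofReal C := by
  classical
  set μ : Measure ℝ := volume.restrict (Ioc (0:ℝ) T) with hμdef
  haveI : IsFiniteMeasure μ := by
    constructor
    rw [hμdef, Measure.restrict_apply_univ, Real.volume_Ioc]
    exact ENNReal.ofReal_lt_top
  set f : ℝ → Ed d := fun s => φ (projIcc 0 T hT.le s) with hfdef
  set fk : ℕ → ℝ → Ed d := fun k s => θ k (projIcc 0 T hT.le s) with hfkdef
  have hfc : Continuous f := φ.continuous.comp continuous_projIcc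
  have hfkc : ∀ k, Continuous (fk k) := fun k => (θ k).continuous.comp continuous_projIcc
  -- uniform bound R
  obtain ⟨Rd, hRd0, hRd⟩ := cauchySeq_bdd hconv.cauchySeq
  set R : ℝ := ‖φ‖ + ‖θ 0‖ + Rd with hRdef
  have hθR : ∀ k, ∀ t, ‖fk k t‖ ≤ R := by
    intro k t
    have h1 : ‖fk k t‖ ≤ ‖θ k‖ := ContinuousMap.norm_coe_le_norm (θ k) _
    have h2 : ‖θ k‖ ≤ ‖θ 0‖ + ‖θ k - θ 0‖ := by
      calc ‖θ k‖ = ‖θ 0 + (θ k - θ 0)‖ := by congr 1; abel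
        _ ≤ ‖θ 0‖ + ‖θ k - θ 0‖ := norm_add_le _ _
    have h3 : ‖θ k - θ 0‖ < Rd := by rw [← dist_eq_norm]; exact hRd k 0
    have h4 : (0:ℝ) ≤ ‖φ‖ := norm_nonneg _
    rw [hRdef]; linarith
  have hfR : ∀ t, ‖f t‖ ≤ R := by
    intro t
    have h1 : ‖f t‖ ≤ ‖φ‖ := ContinuousMap.norm_coe_le_norm φ _
    have h4 : (0:ℝ) ≤ ‖θ 0‖ := norm_nonneg _
    rw [hRdef]; linarith
  -- sup distances
  set ε : ℕ → ℝ := fun k => ‖θ k - φ‖ with hεdef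
  have hεconv : Tendsto ε atTop (𝓝 0) := by
    have h := tendsto_iff_dist_tendsto_zero.1 hconv
    simpa [hεdef, dist_eq_norm] using h
  have hεle : ∀ k, ∀ s : ℝ, ‖fk k s - f s‖ ≤ ε k := by
    intro k s
    calc ‖fk k s - f s‖ = ‖(θ k - φ) (projIcc 0 T hT.le s)‖ := by
          rw [ContinuousMap.sub_apply]
      _ ≤ ‖θ k - φ‖ := ContinuousMap.norm_coe_le_norm _ _
  -- Memℒp of the drift remainders
  have hbmemgen : ∀ h : ℝ → Ed d, Continuous h → (∀ t, ‖h t‖ ≤ R) →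
      MemLp (bfun V F t₀ μ₀ h) 2 μ := by
    intro h hc hR
    have hcont : ContinuousOn (bfun V F t₀ μ₀ h) (Ici 0) :=
      bfun_contOn hV hF hLF hFlip ht₀ hμ₀ hc hR
    have haesm : AEStronglyMeasurable (bfun V F t₀ μ₀ h) μ :=
      (hcont.mono (fun x hx => le_of_lt hx.1)).aestronglyMeasurable measurableSet_Ioc
    refine MemLp.of_bound haesm (Bc V F μ₀ LV LF t₀ T R) ?_
    have hae : ∀ᵐ a ∂μ, a ∈ Ioc (0:ℝ) T := ae_restrict_mem measurableSet_Ioc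
    filter_upwards [hae] with t ht
    exact bfun_bound hF hLV hLF hVlip hFlip ht₀ hμ₀ hR ⟨ht.1.le, ht.2⟩
  have hbk_mem : ∀ k, MemLp (bfun V F t₀ μ₀ (fk k)) 2 μ :=
    fun k => hbmemgen (fk k) (hfkc k) (hθR k)
  have hb_mem : MemLp (bfun V F t₀ μ₀ f) 2 μ := hbmemgen f hfc hfR
  set bkL : ℕ → MeasureTheory.Lp (Ed d) 2 μ := fun k => (hbk_mem k).toLp _ with hbkLdef
  set bL : MeasureTheory.Lp (Ed d) 2 μ := hb_mem.toLp _ with hbLdef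
  -- Memℒp of the derivatives
  have hfk'mem : ∀ k, MemLp (f' k) 2 μ := by
    intro k
    have h1 : IntegrableOn (f' k) (Ioc 0 T) volume :=
      (intervalIntegrable_iff_integrableOn_Ioc_of_le hT.le).1 (hd k).1
    have haesm : AEStronglyMeasurable (f' k) μ := h1.aestronglyMeasurable
    refine (memLp_two_iff_integrable_sq_norm haesm).2 ?_
    have h2 : IntegrableOn (fun s => ‖f' k s‖^2) (Ioc 0 T) volume :=
      (intervalIntegrable_iff_integrableOn_Ioc_of_le hT.le).1 (hd k).2.1
    exact h2
  set uk : ℕ → MeasureTheory.Lp (Ed d) 2 μ := fun k => (hfk'mem k).toLp _ with hukdef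
  set vk : ℕ → MeasureTheory.Lp (Ed d) 2 μ := fun k => uk k + bkL k with hvkdef
  have hvk_coe : ∀ k, (⇑(vk k)) =ᵐ[μ] fun a => drift V F t₀ μ₀ (fk k) (f' k) a := by
    intro k
    filter_upwards [MeasureTheory.Lp.coeFn_add (uk k) (bkL k), (hfk'mem k).coeFn_toLp,
      (hbk_mem k).coeFn_toLp] with a h1 h2 h3
    have : (vk k) a = (uk k) a + (bkL k) a := h1
    rw [this, h2, h3, drift_eq]
  -- integral conversion
  have hIcongr : ∀ (gg : ℝ → Ed d), (∫ t in (0:ℝ)..T, ‖gg t‖^2) = ∫ a, ‖gg a‖^2 ∂μ := by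
    intro gg
    rw [intervalIntegral.integral_of_le hT.le]
  -- norms of vk
  have hvknorm2 : ∀ k, ‖vk k‖^2 ≤ C := by
    intro k
    rw [norm_sq_L2]
    have h := hI k
    rw [hIcongr] at h
    calc ∫ a, ‖(vk k) a‖^2 ∂μ
        = ∫ a, ‖drift V F t₀ μ₀ (fk k) (f' k) a‖^2 ∂μ := by
          refine integral_congr_ae ?_
          filter_upwards [hvk_coe k] with a ha
          rw [ha]
      _ ≤ C := h
  have hvknorm : ∀ k, ‖vk k‖ ≤ Real.sqrt C := by
    intro k
    calc ‖vk k‖ = Real.sqrt (‖vk k‖^2) := (Real.sqrt_sq (norm_nonneg _)).symm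
      _ ≤ Real.sqrt C := Real.sqrt_le_sqrt (hvknorm2 k)
  -- norm of bkL
  set B : ℝ := Bc V F μ₀ LV LF t₀ T R with hBdef
  have hBnn : (0:ℝ) ≤ B :=
    (norm_nonneg (bfun V F t₀ μ₀ f 0)).trans
      (bfun_bound hF hLV hLF hVlip hFlip ht₀ hμ₀ hfR ⟨le_rfl, hT.le⟩)
  have hbknorm : ∀ k, ‖bkL k‖ ≤ B * Real.sqrt T := by
    intro k
    have h1 : ∫ a, ‖(bkL k) a‖^2 ∂μ ≤ B^2 * T := by
      have hle : ∀ᵐ a ∂μ, ‖(bkL k) a‖^2 ≤ B^2 := by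
        have hae : ∀ᵐ a ∂μ, a ∈ Ioc (0:ℝ) T := ae_restrict_mem measurableSet_Ioc
        filter_upwards [hae, (hbk_mem k).coeFn_toLp] with a ha hc
        have hb := bfun_bound hF hLV hLF hVlip hFlip ht₀ hμ₀ (hθR k) ⟨ha.1.le, ha.2⟩
        rw [hc]
        exact pow_le_pow_left₀ (norm_nonneg _) hb 2
      calc ∫ a, ‖(bkL k) a‖^2 ∂μ ≤ ∫ _a, B^2 ∂μ :=
            integral_mono_of_nonneg (Eventually.of_forall fun a => by positivity)
              (integrable_const _) hle
        _ = B^2 * T := by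
            rw [integral_const, smul_eq_mul, hμdef, measureReal_def, Measure.restrict_apply_univ,
              Real.volume_Ioc, ENNReal.toReal_ofReal (by linarith)]
            ring
    have h2 : ‖bkL k‖^2 ≤ B^2 * T := by rw [norm_sq_L2]; exact h1
    calc ‖bkL k‖ = Real.sqrt (‖bkL k‖^2) := (Real.sqrt_sq (norm_nonneg _)).symm
      _ ≤ Real.sqrt (B^2 * T) := Real.sqrt_le_sqrt h2
      _ = B * Real.sqrt T := by
          rw [Real.sqrt_mul (sq_nonneg B), Real.sqrt_sq hBnn]
  -- uk bounded
  set r : ℝ := Real.sqrt C + B * Real.sqrt T with hrdef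
  have huknorm : ∀ k, ‖uk k‖ ≤ r := by
    intro k
    have he : uk k = vk k - bkL k := by
      show uk k = uk k + bkL k - bkL k
      rw [add_sub_cancel_right]
    rw [he, hrdef]
    exact (norm_sub_le _ _).trans (add_le_add (hvknorm k) (hbknorm k))
  -- weak cluster point
  obtain ⟨u, hu⟩ := exists_weak_cluster uk huknorm
  set g : ℝ → Ed d := fun a => u a with hgdef
  have humem : MemLp g 2 μ := MeasureTheory.Lp.memLp u
  -- the derivative identity for the limit
  have hbigkey : ∀ t, t ∈ Icc (0:ℝ) T → (∫ s in (0:ℝ)..t, g s) = f t - f 0 := by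
    intro t ht
    have hsub : Ioc (0:ℝ) t ⊆ Ioc 0 T := Ioc_subset_Ioc le_rfl ht.2
    have hμs : μ (Ioc (0:ℝ) t) ≠ ⊤ := measure_ne_top μ _
    have hrr : μ.restrict (Ioc (0:ℝ) t) = volume.restrict (Ioc (0:ℝ) t) := by
      rw [hμdef, Measure.restrict_restrict measurableSet_Ioc, inter_eq_self_of_subset_left hsub]
    have hsetint : ∀ (z : MeasureTheory.Lp (Ed d) 2 μ) (zf : ℝ → Ed d), (⇑z =ᵐ[μ] zf) →
        (∫ x in Ioc (0:ℝ) t, z x ∂μ) = ∫ s in (0:ℝ)..t, zf s := by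
      intro z zf hz
      rw [intervalIntegral.integral_of_le ht.1]
      have hz' : ⇑z =ᵐ[volume.restrict (Ioc (0:ℝ) t)] zf := by
        have h := hz.filter_mono (ae_mono (Measure.restrict_le_self (μ := μ) (s := Ioc (0:ℝ) t)))
        rwa [hrr] at h
      rw [hrr]
      exact integral_congr_ae hz'
    apply ext_inner_right ℝ
    intro e
    set w : MeasureTheory.Lp (Ed d) 2 μ := indicatorConstLp 2 measurableSet_Ioc hμs e with hwdef
    have hw1 : ∀ z : MeasureTheory.Lp (Ed d) 2 μ,
        (⟪w, z⟫ : ℝ) = ⟪e, ∫ x in Ioc (0:ℝ) t, z x ∂μ⟫ := fun z =>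
      L2.inner_indicatorConstLp_eq_inner_setIntegral ℝ measurableSet_Ioc hμs e z
    have hder : ∀ k, (∫ s in (0:ℝ)..t, f' k s) = fk k t - fk k 0 := by
      intro k
      have h := (hd k).2.2 t ht
      simp only [] at h
      show (∫ s in (0:ℝ)..t, f' k s) = θ k (projIcc 0 T hT.le t) - θ k (projIcc 0 T hT.le 0)
      rw [h]; abel
    have hS : ∀ k, (⟪uk k, w⟫ : ℝ) = ⟪fk k t - fk k 0, e⟫ := by
      intro k
      rw [real_inner_comm, hw1 (uk k), hsetint (uk k) (f' k) (hfk'mem k).coeFn_toLp, hder k,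
        real_inner_comm]
    have hTend : Tendsto (fun k => (⟪fk k t - fk k 0, e⟫ : ℝ)) atTop (𝓝 ⟪f t - f 0, e⟫) := by
      have h1 : Tendsto (fun k => fk k t) atTop (𝓝 (f t)) :=
        ((continuous_eval_const (projIcc 0 T hT.le t)).tendsto φ).comp hconv
      have h0 : Tendsto (fun k => fk k 0) atTop (𝓝 (f 0)) :=
        ((continuous_eval_const (projIcc 0 T hT.le 0)).tendsto φ).comp hconv
      exact (h1.sub h0).inner tendsto_const_nhds
    have hcl := hu w
    rw [show (fun k => (⟪uk k, w⟫ : ℝ)) = fun k => (⟪fk k t - fk k 0, e⟫ : ℝ) from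
      funext hS] at hcl
    have he1 : (⟪u, w⟫ : ℝ) = ⟪f t - f 0, e⟫ := mapClusterPt_eq_limit hcl hTend
    have he2 : (⟪u, w⟫ : ℝ) = ⟪∫ s in (0:ℝ)..t, g s, e⟫ := by
      rw [real_inner_comm, hw1 u, hsetint u g EventuallyEq.rfl, real_inner_comm]
    rw [← he2, he1]
  -- HasL2Deriv for the limit
  have hgint : IntegrableOn g (Ioc 0 T) volume := by
    have h1 : MemLp g 1 μ := humem.mono_exponent (by norm_num)
    exact memLp_one_iff_integrable.1 h1
  have hgsq : IntegrableOn (fun s => ‖g s‖^2) (Ioc 0 T) volume := by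
    exact (memLp_two_iff_integrable_sq_norm humem.aestronglyMeasurable).1 humem
  have hL2 : HasL2Deriv T f g := by
    refine ⟨(intervalIntegrable_iff_integrableOn_Ioc_of_le hT.le).2 hgint,
      (intervalIntegrable_iff_integrableOn_Ioc_of_le hT.le).2 hgsq, fun t ht => ?_⟩
    rw [hbigkey t ht]; abel
  -- final quadratic bound
  set v : MeasureTheory.Lp (Ed d) 2 μ := u + bL with hvdef
  have hvcoe : (⇑v) =ᵐ[μ] fun a => drift V F t₀ μ₀ f g a := by
    filter_upwards [MeasureTheory.Lp.coeFn_add u bL, hb_mem.coeFn_toLp] with a h1 h2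
    have : v a = u a + bL a := h1
    rw [this, h2, drift_eq]
  set K : ℝ := LV + LF + 2 * LF * T / t₀ with hKdef
  have hKnn : 0 ≤ K := by rw [hKdef]; positivity
  have hbdiff : ∀ k, ‖bkL k - bL‖ ≤ K * ε k * Real.sqrt T := by
    intro k
    have hεk : 0 ≤ ε k := (norm_nonneg _).trans (hεle k 0)
    have h1 : ∫ a, ‖(bkL k - bL) a‖^2 ∂μ ≤ (K * ε k)^2 * T := by
      have hle : ∀ᵐ a ∂μ, ‖(bkL k - bL) a‖^2 ≤ (K * ε k)^2 := by
        have hae : ∀ᵐ a ∂μ, a ∈ Ioc (0:ℝ) T := ae_restrict_mem measurableSet_Ioc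
        filter_upwards [hae, (hbk_mem k).coeFn_toLp, hb_mem.coeFn_toLp,
          MeasureTheory.Lp.coeFn_sub (bkL k) bL] with a ha hc1 hc2 hc3
        have hb := bfun_diff hF hLV hLF hVlip hFlip ht₀ hμ₀ hfc (hfkc k)
          (fun s => hεle k s) (⟨ha.1.le, ha.2⟩ : a ∈ Icc 0 T)
        have : ‖(bkL k - bL) a‖ ≤ K * ε k := by
          rw [hc3]
          calc ‖(bkL k) a - bL a‖ = ‖bfun V F t₀ μ₀ (fk k) a - bfun V F t₀ μ₀ f a‖ := by
                rw [hc1, hc2]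
            _ ≤ K * ε k := by rw [hKdef]; exact hb
        exact pow_le_pow_left₀ (norm_nonneg _) this 2
      calc ∫ a, ‖(bkL k - bL) a‖^2 ∂μ ≤ ∫ _a, (K * ε k)^2 ∂μ :=
            integral_mono_of_nonneg (Eventually.of_forall fun a => by positivity)
              (integrable_const _) hle
        _ = (K * ε k)^2 * T := by
            rw [integral_const, smul_eq_mul, hμdef, measureReal_def, Measure.restrict_apply_univ,
              Real.volume_Ioc, ENNReal.toReal_ofReal (by linarith)]
            ring
    have h2 : ‖bkL k - bL‖^2 ≤ (K * ε k)^2 * T := by rw [norm_sq_L2]; exact h1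
    calc ‖bkL k - bL‖ = Real.sqrt (‖bkL k - bL‖^2) := (Real.sqrt_sq (norm_nonneg _)).symm
      _ ≤ Real.sqrt ((K * ε k)^2 * T) := Real.sqrt_le_sqrt h2
      _ = K * ε k * Real.sqrt T := by
          rw [Real.sqrt_mul (sq_nonneg _), Real.sqrt_sq (by positivity)]
  have hbtend : Tendsto (fun k => (⟪bkL k, v⟫ : ℝ)) atTop (𝓝 ⟪bL, v⟫) := by
    have h1 : Tendsto (fun k => bkL k) atTop (𝓝 bL) := by
      rw [tendsto_iff_norm_sub_tendsto_zero]
      refine squeeze_zero (fun k => norm_nonneg _) (fun k => hbdiff k) ?_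
      have h2 : Tendsto (fun k => K * ε k * Real.sqrt T) atTop (𝓝 (K * 0 * Real.sqrt T)) :=
        (hεconv.const_mul K).mul_const (Real.sqrt T)
      simpa using h2
    exact h1.inner tendsto_const_nhds
  have hsum : MapClusterPt ((⟪u, v⟫ : ℝ) + ⟪bL, v⟫) atTop
      (fun k => (⟪uk k, v⟫ : ℝ) + ⟪bkL k, v⟫) := mapClusterPt_add_tendsto (hu v) hbtend
  have hvkv : (fun k => (⟪uk k, v⟫ : ℝ) + ⟪bkL k, v⟫) = fun k => (⟪vk k, v⟫ : ℝ) :=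
    funext fun k => (inner_add_left _ _ _).symm
  rw [hvkv] at hsum
  have hvv : (⟪u, v⟫ : ℝ) + ⟪bL, v⟫ = ⟪v, v⟫ := (inner_add_left _ _ _).symm
  rw [hvv] at hsum
  have hle2 : ∀ k, (⟪vk k, v⟫ : ℝ) ≤ Real.sqrt C * ‖v‖ := fun k =>
    (real_inner_le_norm _ _).trans (mul_le_mul_of_nonneg_right (hvknorm k) (norm_nonneg _))
  have hvle : (⟪v, v⟫ : ℝ) ≤ Real.sqrt C * ‖v‖ := mapClusterPt_le hsum hle2
  have hnormv : ‖v‖^2 ≤ C := by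
    rw [← real_inner_self_eq_norm_sq] at *
    rcases eq_or_lt_of_le (norm_nonneg v) with h0 | h0
    · rw [real_inner_self_eq_norm_sq, ← h0]; simpa using hC
    · have h3 : ‖v‖ ≤ Real.sqrt C := by
        have h4 : ‖v‖ * ‖v‖ ≤ Real.sqrt C * ‖v‖ := by
          rwa [real_inner_self_eq_norm_mul_norm] at hvle
        exact le_of_mul_le_mul_right h4 h0
      rw [real_inner_self_eq_norm_sq]
      calc ‖v‖^2 ≤ (Real.sqrt C)^2 := pow_le_pow_left₀ (norm_nonneg _) h3 2
        _ = C := Real.sq_sqrt hC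
  -- conclusion
  have hJ : Jfun V F T t₀ μ₀ f ≤
      ENNReal.ofReal (∫ t in (0:ℝ)..T, ‖drift V F t₀ μ₀ f g t‖^2) := by
    rw [Jfun]
    exact iInf₂_le g hL2
  have hfinal : (∫ t in (0:ℝ)..T, ‖drift V F t₀ μ₀ f g t‖^2) ≤ C := by
    rw [hIcongr]
    calc ∫ a, ‖drift V F t₀ μ₀ f g a‖^2 ∂μ = ∫ a, ‖v a‖^2 ∂μ := by
          refine integral_congr_ae ?_
          filter_upwards [hvcoe] with a ha
          rw [ha]
      _ = ‖v‖^2 := (norm_sq_L2 v).symm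
      _ ≤ C := hnormv
  exact hJ.trans (ENNReal.ofReal_le_ofReal hfinal)

end Stmt8Aux

/-- Corollary 2.5: the infimum of the rate function over a nonempty
compact set of paths in `C([0,T]; ℝ^d)` is attained. -/
theorem stmt8 {d : ℕ} (hd : 1 ≤ d)
    (V F : Ed d → ℝ) (hV : ContDiff ℝ 2 V) (hF : ContDiff ℝ 2 F)
    (LV LF : ℝ) (hLV : 0 ≤ LV) (hLF : 0 ≤ LF)
    (hVlip : ∀ x y : Ed d, ‖gradient V x - gradient V y‖ ≤ LV * ‖x - y‖)
    (hFlip : ∀ x y : Ed d, ‖gradient F x - gradient F y‖ ≤ LF * ‖x - y‖)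
    (T : ℝ) (hT : 0 < T) (t₀ : ℝ) (ht₀ : 0 < t₀)
    (μ₀ : Measure (Ed d)) (hprob : IsProbabilityMeasure μ₀)
    (hμ₀ : Integrable (fun u => ‖u‖ ^ 2) μ₀)
    (Φ : Set C(↥(Icc (0:ℝ) T), Ed d)) (hΦc : IsCompact Φ) (hΦne : Φ.Nonempty) :
    ∃ φ ∈ Φ, Jfun V F T t₀ μ₀ (fun s => φ (projIcc 0 T hT.le s)) =
      ⨅ ψ ∈ Φ, Jfun V F T t₀ μ₀ (fun s => ψ (projIcc 0 T hT.le s)) := by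
  classical
  haveI := hprob
  set g : C(↥(Icc (0:ℝ) T), Ed d) → ℝ≥0∞ :=
    fun ψ => Jfun V F T t₀ μ₀ (fun s => ψ (projIcc 0 T hT.le s)) with hgdef
  set m : ℝ≥0∞ := ⨅ ψ ∈ Φ, g ψ with hmdef
  by_cases hm : m = ⊤
  · obtain ⟨φ0, hφ0⟩ := hΦne
    refine ⟨φ0, hφ0, ?_⟩
    have h1 : m ≤ g φ0 := iInf₂_le φ0 hφ0
    have h2 : g φ0 = ⊤ := top_unique (hm ▸ h1)
    show g φ0 = m
    rw [h2, hm]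
  · -- minimizing sequence
    have hseq : ∀ n : ℕ, ∃ ψ0 ∈ Φ, g ψ0 < m + ENNReal.ofReal (1/(n+1)) := by
      intro n
      have hpos : (0:ℝ≥0∞) < ENNReal.ofReal (1/(n+1)) := by
        rw [ENNReal.ofReal_pos]; positivity
      have hlt : m < m + ENNReal.ofReal (1/(n+1)) := ENNReal.lt_add_right hm hpos.ne'
      conv_lhs at hlt => rw [hmdef]
      obtain ⟨ψ0, hψ0⟩ := iInf_lt_iff.1 hlt
      obtain ⟨hmem, hval⟩ := iInf_lt_iff.1 hψ0
      exact ⟨ψ0, hmem, hval⟩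
    choose ψ hψmem hψlt using hseq
    obtain ⟨φs, hφmem, ρ, hρmono, hρtend⟩ := hΦc.isSeqCompact hψmem
    refine ⟨φs, hφmem, ?_⟩
    have hub : ∀ j : ℕ, g φs ≤ m + ENNReal.ofReal (1/(j+1)) := by
      intro j
      set c : ℝ≥0∞ := m + ENNReal.ofReal (1/(j+1)) with hcdef
      have hcne : c ≠ ⊤ := by
        rw [hcdef]
        exact ENNReal.add_ne_top.2 ⟨hm, ENNReal.ofReal_ne_top⟩
      set C : ℝ := c.toReal with hCdef
      have hC0 : 0 ≤ C := ENNReal.toReal_nonneg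
      have hCc : ENNReal.ofReal C = c := ENNReal.ofReal_toReal hcne
      set Θ : ℕ → C(↥(Icc (0:ℝ) T), Ed d) := fun i => ψ (ρ (i + j)) with hΘdef
      have hΘconv : Tendsto Θ atTop (𝓝 φs) := by
        have h1 : Tendsto (fun i : ℕ => i + j) atTop atTop := tendsto_add_atTop_nat j
        exact hρtend.comp h1
      have hΘle : ∀ i, g (Θ i) ≤ c := by
        intro i
        refine (hψlt (ρ (i + j))).le.trans ?_
        rw [hcdef]
        refine add_le_add_right (ENNReal.ofReal_le_ofReal ?_) m
        have h1 : (j:ℝ) + 1 ≤ (ρ (i + j) : ℝ) + 1 := by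
          have h2 : j ≤ ρ (i + j) := le_trans (Nat.le_add_left j i) (hρmono.le_apply)
          exact_mod_cast Nat.succ_le_succ h2
        exact one_div_le_one_div_of_le (by positivity) h1
      -- remove δ
      refine le_trans ?_ (le_of_eq rfl)
      have hδ : ∀ δ : ℝ, 0 < δ → g φs ≤ c + ENNReal.ofReal δ := by
        intro δ hδ0
        have hext : ∀ i : ℕ, ∃ fd : ℝ → Ed d,
            HasL2Deriv T (fun s => (Θ i) (projIcc 0 T hT.le s)) fd ∧
            (∫ t in (0:ℝ)..T,
              ‖drift V F t₀ μ₀ (fun s => (Θ i) (projIcc 0 T hT.le s)) fd t‖ ^ 2) ≤ C + δ := by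
          intro i
          have hlt2 : g (Θ i) < c + ENNReal.ofReal δ := by
            refine lt_of_le_of_lt (hΘle i) ?_
            refine ENNReal.lt_add_right hcne ?_
            exact (ENNReal.ofReal_pos.2 hδ0).ne'
          have hlt3 : (⨅ (fd : ℝ → Ed d)
              (_ : HasL2Deriv T (fun s => (Θ i) (projIcc 0 T hT.le s)) fd),
              ENNReal.ofReal (∫ t in (0:ℝ)..T,
                ‖drift V F t₀ μ₀ (fun s => (Θ i) (projIcc 0 T hT.le s)) fd t‖ ^ 2))
              < c + ENNReal.ofReal δ := hlt2
          obtain ⟨fd, hfd⟩ := iInf_lt_iff.1 hlt3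
          obtain ⟨hfd1, hfd2⟩ := iInf_lt_iff.1 hfd
          refine ⟨fd, hfd1, ?_⟩
          have hrw : c + ENNReal.ofReal δ = ENNReal.ofReal (C + δ) := by
            rw [ENNReal.ofReal_add hC0 hδ0.le, hCc]
          rw [hrw] at hfd2
          have := (ENNReal.ofReal_lt_ofReal_iff (by positivity)).1 hfd2
          exact this.le
        choose fd hfd1 hfd2 using hext
        have hcore := Stmt8Aux.core hV hF hLV hLF hVlip hFlip hT ht₀ hμ₀ Θ φs hΘconv
          (by positivity : (0:ℝ) ≤ C + δ) fd hfd1 hfd2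
        refine hcore.trans ?_
        rw [ENNReal.ofReal_add hC0 hδ0.le, hCc]
      refine ENNReal.le_of_forall_pos_le_add ?_
      intro η hη _
      have := hδ (η : ℝ) (by exact_mod_cast hη)
      rwa [ENNReal.ofReal_coe_nnreal] at this
    -- conclude
    refine le_antisymm ?_ (iInf₂_le φs hφmem)
    refine ENNReal.le_of_forall_pos_le_add ?_
    intro η hη hmtop
    obtain ⟨j, hj⟩ := exists_nat_one_div_lt (by exact_mod_cast hη : (0:ℝ) < (η:ℝ))
    refine (hub j).trans ?_
    refine add_le_add_right ?_ m
    refine le_trans (ENNReal.ofReal_le_ofReal hj.le) ?_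
    rw [ENNReal.ofReal_coe_nnreal]
end
end

section
/- Fix a ∈ ℝ^d and suppose there are Δ_μ, Δ_x > 0 and K > 0 such that for every probability measure μ on ℝ^d with ∫|z−a|² dμ(z) ≤ Δ_μ² and every x with |x−a| ≤ Δ_x, ⟨∇V(x) + ∇F*μ(x), x−a⟩ ≥ K·|x−a|². Fix T > 0, t₀ ∈ (0,∞), x₀ ∈ ℝ^d and a probability measure μ₀ with finite second moment, and let X : [0,T] → ℝ^d be continuous with X_t = x₀ − ∫₀ᵗ ∇V(X_s) ds − ∫₀ᵗ (t₀/(t₀+s))·∇F*μ₀(X_s) ds − ∫₀ᵗ (1/(t₀+s))·∫₀ˢ ∇F(X_s−X_u) du ds for all t. If for all t ∈ [0,T] one has M(t) := (t₀·∫|z−a|² dμ₀(z) + ∫₀ᵗ |X_u−a|² du)/(t₀+t) ≤ Δ_μ² and |X_t − a| ≤ Δ_x, then for all t ∈ [0,T]: |X_t − a|² ≤ |x₀ − a|²·e^{−2Kt}. -/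
open MeasureTheory Set
open scoped RealInnerProductSpace

noncomputable section

private lemma integral_mix {d : ℕ} {E : Type*} [NormedAddCommGroup E] [NormedSpace ℝ E]
    (μ₀ : Measure (Ed d)) (X : ℝ → Ed d) (t : ℝ)
    (hXae : AEMeasurable X (volume.restrict (Ioc 0 t)))
    (c₁ c₂ : ℝ) (hc₁ : 0 ≤ c₁) (hc₂ : 0 ≤ c₂)
    (f : Ed d → E) (hf : Continuous f)
    (hfμ₀ : Integrable f μ₀)
    (hfX : IntegrableOn (fun u => f (X u)) (Ioc 0 t) volume) :
    ∫ z, f z ∂(ENNReal.ofReal c₁ • μ₀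
        + ENNReal.ofReal c₂ • Measure.map X (volume.restrict (Ioc 0 t)))
      = c₁ • ∫ z, f z ∂μ₀ + c₂ • ∫ u in Ioc (0:ℝ) t, f (X u) := by
  have hν : Integrable f (Measure.map X (volume.restrict (Ioc 0 t))) :=
    (integrable_map_measure hf.aestronglyMeasurable hXae).mpr hfX
  rw [integral_add_measure (hfμ₀.smul_measure ENNReal.ofReal_ne_top)
      (hν.smul_measure ENNReal.ofReal_ne_top),
    integral_smul_measure, integral_smul_measure,
    integral_map hXae hf.aestronglyMeasurable,
    ENNReal.toReal_ofReal hc₁, ENNReal.toReal_ofReal hc₂]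

set_option maxHeartbeats 2000000 in
/-- exponential contraction towards `a` of the deterministic
generalized self-interacting process under the strong-attraction hypothesis
(Assumption A-2.4), as long as the occupation measure stays `Δ_μ`-close to `δ_a`
and the path stays in the `Δ_x`-ball around `a`. -/
theorem stmt11 {d : ℕ} (hd : 1 ≤ d)
    (V F : Ed d → ℝ) (hV : ContDiff ℝ 2 V) (hF : ContDiff ℝ 2 F)
    (LV LF : ℝ) (hLV : 0 ≤ LV) (hLF : 0 ≤ LF)
    (hVlip : ∀ x y : Ed d, ‖gradient V x - gradient V y‖ ≤ LV * ‖x - y‖)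
    (hFlip : ∀ x y : Ed d, ‖gradient F x - gradient F y‖ ≤ LF * ‖x - y‖)
    (a : Ed d)
    (Δμ Δx K : ℝ) (hΔμ : 0 < Δμ) (hΔx : 0 < Δx) (hK : 0 < K)
    (hattr : ∀ μ : Measure (Ed d), IsProbabilityMeasure μ →
      Integrable (fun z => ‖z - a‖ ^ 2) μ → (∫ z, ‖z - a‖ ^ 2 ∂μ) ≤ Δμ ^ 2 →
      ∀ x : Ed d, ‖x - a‖ ≤ Δx →
        K * ‖x - a‖ ^ 2 ≤ ⟪gradient V x + (∫ u, gradient F (x - u) ∂μ), x - a⟫)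
    (T : ℝ) (hT : 0 < T) (t₀ : ℝ) (ht₀ : 0 < t₀) (x₀ : Ed d)
    (μ₀ : Measure (Ed d)) (hprob : IsProbabilityMeasure μ₀)
    (hμ₀ : Integrable (fun u => ‖u‖ ^ 2) μ₀)
    (X : ℝ → Ed d) (hXc : ContinuousOn X (Icc 0 T))
    (hX : ∀ t ∈ Icc (0:ℝ) T,
      X t = x₀ - (∫ s in (0:ℝ)..t, gradient V (X s))
        - (∫ s in (0:ℝ)..t, (t₀ / (t₀ + s)) • (∫ u, gradient F (X s - u) ∂μ₀))
        - (∫ s in (0:ℝ)..t,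
            (1 / (t₀ + s)) • (∫ u in (0:ℝ)..s, gradient F (X s - X u))))
    (hM : ∀ t ∈ Icc (0:ℝ) T,
      (t₀ * (∫ z, ‖z - a‖ ^ 2 ∂μ₀) + ∫ u in (0:ℝ)..t, ‖X u - a‖ ^ 2) / (t₀ + t)
        ≤ Δμ ^ 2)
    (hball : ∀ t ∈ Icc (0:ℝ) T, ‖X t - a‖ ≤ Δx) :
    ∀ t ∈ Icc (0:ℝ) T,
      ‖X t - a‖ ^ 2 ≤ ‖x₀ - a‖ ^ 2 * Real.exp (-2 * K * t) := by
  -- continuity of gradients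
  have hgradF_cont : Continuous (gradient F) := by
    refine (LipschitzWith.of_dist_le_mul (K := ⟨LF, hLF⟩) (f := gradient F) ?_).continuous
    intro x y; rw [dist_eq_norm, dist_eq_norm]; exact hFlip x y
  have hgradV_cont : Continuous (gradient V) := by
    refine (LipschitzWith.of_dist_le_mul (K := ⟨LV, hLV⟩) (f := gradient V) ?_).continuous
    intro x y; rw [dist_eq_norm, dist_eq_norm]; exact hVlip x y
  have hden : ∀ s ∈ Icc (0:ℝ) T, (0:ℝ) < t₀ + s := fun s hs => by
    have := hs.1; linarith
  -- first moment of μ₀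
  have hmom1 : Integrable (fun u : Ed d => ‖u‖) μ₀ := by
    refine (hμ₀.add (integrable_const 1)).mono'
      continuous_norm.aestronglyMeasurable ?_
    filter_upwards with u
    have h1 : ‖u‖ ≤ ‖u‖^2 + 1 := by nlinarith [norm_nonneg u]
    simpa [abs_of_nonneg (norm_nonneg u)] using h1
  set Φ : Ed d → Ed d := fun x => ∫ u, gradient F (x - u) ∂μ₀ with hΦdef
  have hΦint : ∀ x : Ed d, Integrable (fun u => gradient F (x - u)) μ₀ := by
    intro x
    refine ((hmom1.const_mul LF).add (integrable_const ‖gradient F x‖)).mono'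
      (hgradF_cont.comp (continuous_const.sub continuous_id)).aestronglyMeasurable ?_
    filter_upwards with u
    have := hFlip (x - u) x
    have h2 : ‖gradient F (x-u)‖ - ‖gradient F x‖ ≤ ‖gradient F (x - u) - gradient F x‖ :=
      norm_sub_norm_le _ _
    have h3 : ‖x - u - x‖ = ‖u‖ := by simp [sub_sub_cancel_left, norm_neg]
    rw [h3] at this
    simp only [Pi.add_apply, norm_norm]
    linarith
  have hΦlip : ∀ x y : Ed d, ‖Φ x - Φ y‖ ≤ LF * ‖x - y‖ := by
    intro x y
    rw [hΦdef]
    rw [← integral_sub (hΦint x) (hΦint y)]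
    calc ‖∫ u, (gradient F (x - u) - gradient F (y - u)) ∂μ₀‖
        ≤ ∫ u, ‖gradient F (x - u) - gradient F (y - u)‖ ∂μ₀ := norm_integral_le_integral_norm _
      _ ≤ ∫ _u, LF * ‖x - y‖ ∂μ₀ := by
          refine integral_mono ((hΦint x).sub (hΦint y)).norm (integrable_const _) ?_
          intro u
          have := hFlip (x - u) (y - u)
          simpa [sub_sub_sub_cancel_right] using this
      _ = LF * ‖x - y‖ := by simp
  have hΦcont : Continuous Φ := by
    refine (LipschitzWith.of_dist_le_mul (K := ⟨LF, hLF⟩) (f := Φ) ?_).continuous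
    intro x y; rw [dist_eq_norm, dist_eq_norm]; exact hΦlip x y
  -- the three drift pieces
  set Ψ : ℝ → Ed d := fun s => ∫ u in (0:ℝ)..s, gradient F (X s - X u) with hΨdef
  set b : ℝ → Ed d := fun s =>
    gradient V (X s) + (t₀ / (t₀ + s)) • Φ (X s) + (1 / (t₀ + s)) • Ψ s with hbdef
  have hfc : ∀ s ∈ Icc (0:ℝ) T, ContinuousOn (fun u => gradient F (X s - X u)) (Icc 0 T) :=
    fun s _ => hgradF_cont.comp_continuousOn (continuousOn_const.sub hXc)
  set C : ℝ := ‖gradient F 0‖ + LF * (2 * Δx) with hCdef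
  have hbnd : ∀ s ∈ Icc (0:ℝ) T, ∀ u ∈ Icc (0:ℝ) T, ‖gradient F (X s - X u)‖ ≤ C := by
    intro s hs u hu
    have h1 := hFlip (X s - X u) 0
    have h2 : ‖X s - X u‖ ≤ 2 * Δx := by
      have ha1 := hball s hs; have ha2 := hball u hu
      calc ‖X s - X u‖ = ‖(X s - a) - (X u - a)‖ := by rw [sub_sub_sub_cancel_right]
        _ ≤ ‖X s - a‖ + ‖X u - a‖ := norm_sub_le _ _
        _ ≤ 2 * Δx := by linarith
    have h3 : ‖gradient F (X s - X u)‖ - ‖gradient F 0‖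
        ≤ ‖gradient F (X s - X u) - gradient F 0‖ := norm_sub_norm_le _ _
    have h4 : LF * ‖X s - X u‖ ≤ LF * (2 * Δx) := by
      exact mul_le_mul_of_nonneg_left h2 hLF
    simp only [sub_zero] at h1
    rw [hCdef]; linarith
  have hΨc : ContinuousOn Ψ (Icc 0 T) := by
    intro s' hs'
    have key : ∀ s ∈ Icc (0:ℝ) T,
        ‖Ψ s - Ψ s'‖ ≤ (T * LF) * ‖X s - X s'‖ + C * |s - s'| := by
      intro s hs
      have i1 : IntervalIntegrable (fun u => gradient F (X s - X u)) volume 0 s' :=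
        ((hfc s hs).mono (uIcc_subset_Icc ⟨le_refl 0, hT.le⟩ hs')).intervalIntegrable
      have i1' : IntervalIntegrable (fun u => gradient F (X s' - X u)) volume 0 s' :=
        ((hfc s' hs').mono (uIcc_subset_Icc ⟨le_refl 0, hT.le⟩ hs')).intervalIntegrable
      have i2 : IntervalIntegrable (fun u => gradient F (X s - X u)) volume s' s :=
        ((hfc s hs).mono (uIcc_subset_Icc hs' hs)).intervalIntegrable
      have hsplit : Ψ s = (∫ u in (0:ℝ)..s', gradient F (X s - X u))
          + ∫ u in s'..s, gradient F (X s - X u) :=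
        (intervalIntegral.integral_add_adjacent_intervals i1 i2).symm
      have hDn : ‖(∫ u in (0:ℝ)..s', gradient F (X s - X u)) - Ψ s'‖
          ≤ (T * LF) * ‖X s - X s'‖ := by
        rw [hΨdef]
        rw [← intervalIntegral.integral_sub i1 i1']
        have := intervalIntegral.norm_integral_le_of_norm_le_const
          (a := 0) (b := s') (C := LF * ‖X s - X s'‖)
          (f := fun u => gradient F (X s - X u) - gradient F (X s' - X u)) ?_
        · calc ‖∫ u in (0:ℝ)..s', (gradient F (X s - X u) - gradient F (X s' - X u))‖
              ≤ (LF * ‖X s - X s'‖) * |s' - 0| := this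
            _ ≤ (LF * ‖X s - X s'‖) * T := by
                refine mul_le_mul_of_nonneg_left ?_ (by positivity)
                rw [sub_zero, abs_of_nonneg hs'.1]; exact hs'.2
            _ = (T * LF) * ‖X s - X s'‖ := by ring
        · intro u _
          have := hFlip (X s - X u) (X s' - X u)
          simpa [sub_sub_sub_cancel_right] using this
      have hBn : ‖∫ u in s'..s, gradient F (X s - X u)‖ ≤ C * |s - s'| := by
        refine intervalIntegral.norm_integral_le_of_norm_le_const ?_
        intro u hu
        have hu' : u ∈ Icc (0:ℝ) T := by
          have : Set.uIoc s' s ⊆ Icc 0 T := (uIoc_subset_uIcc ..).trans (uIcc_subset_Icc hs' hs)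
          exact this hu
        exact hbnd s hs u hu'
      calc ‖Ψ s - Ψ s'‖
          = ‖((∫ u in (0:ℝ)..s', gradient F (X s - X u)) - Ψ s')
              + ∫ u in s'..s, gradient F (X s - X u)‖ := by rw [hsplit]; congr 1; abel
        _ ≤ ‖(∫ u in (0:ℝ)..s', gradient F (X s - X u)) - Ψ s'‖
              + ‖∫ u in s'..s, gradient F (X s - X u)‖ := norm_add_le _ _
        _ ≤ (T * LF) * ‖X s - X s'‖ + C * |s - s'| := add_le_add hDn hBn
    rw [ContinuousWithinAt, tendsto_iff_norm_sub_tendsto_zero]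
    refine squeeze_zero' (g := fun s => (T * LF) * ‖X s - X s'‖ + C * |s - s'|)
      (Filter.Eventually.of_forall fun s => norm_nonneg _) ?_ ?_
    · filter_upwards [eventually_mem_nhdsWithin] with s hs using key s hs
    · have t1 : Filter.Tendsto (fun s => ‖X s - X s'‖) (nhdsWithin s' (Icc 0 T)) (nhds 0) :=
        tendsto_iff_norm_sub_tendsto_zero.mp (hXc s' hs')
      have t2 : Filter.Tendsto (fun s : ℝ => |s - s'|) (nhdsWithin s' (Icc 0 T)) (nhds 0) := by
        have hcabs : Continuous (fun s : ℝ => |s - s'|) :=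
          (continuous_id.sub continuous_const).abs
        have : Filter.Tendsto (fun s : ℝ => |s - s'|) (nhds s') (nhds 0) := by
          simpa using hcabs.tendsto s'
        exact this.mono_left nhdsWithin_le_nhds
      have t3 : Filter.Tendsto (fun s => (T * LF) * ‖X s - X s'‖ + C * |s - s'|)
          (nhdsWithin s' (Icc 0 T)) (nhds ((T * LF) * 0 + C * 0)) :=
        (Filter.Tendsto.const_mul _ t1).add (Filter.Tendsto.const_mul _ t2)
      simpa using t3
  have hbc : ContinuousOn b (Icc 0 T) := by
    refine ContinuousOn.add (ContinuousOn.add ?_ ?_) ?_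
    · exact hgradV_cont.comp_continuousOn hXc
    · exact (continuousOn_const.div (continuousOn_const.add continuousOn_id)
        (fun s hs => (hden s hs).ne')).smul (hΦcont.comp_continuousOn hXc)
    · exact (continuousOn_const.div (continuousOn_const.add continuousOn_id)
        (fun s hs => (hden s hs).ne')).smul hΨc
  have hsub : ∀ t ∈ Icc (0:ℝ) T, Icc (0:ℝ) t ⊆ Icc (0:ℝ) T := fun t ht =>
    Icc_subset_Icc le_rfl ht.2
  have hcg2 : ContinuousOn (fun s => (t₀ / (t₀ + s)) • (∫ u, gradient F (X s - u) ∂μ₀))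
      (Icc 0 T) := by
    refine ContinuousOn.smul (continuousOn_const.div
      (continuousOn_const.add continuousOn_id) (fun s hs => (hden s hs).ne')) ?_
    exact hΦcont.comp_continuousOn hXc
  have hcg3 : ContinuousOn (fun s => (1 / (t₀ + s)) •
      (∫ u in (0:ℝ)..s, gradient F (X s - X u))) (Icc 0 T) := by
    refine ContinuousOn.smul (continuousOn_const.div
      (continuousOn_const.add continuousOn_id) (fun s hs => (hden s hs).ne')) hΨc
  have hXeq : ∀ t ∈ Icc (0:ℝ) T, X t = x₀ - ∫ s in (0:ℝ)..t, b s := by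
    intro t ht
    have hsub' : uIcc (0:ℝ) t ⊆ Icc 0 T := uIcc_subset_Icc ⟨le_refl 0, hT.le⟩ ht
    have i1 : IntervalIntegrable (fun s => gradient V (X s)) volume 0 t :=
      ((hgradV_cont.comp_continuousOn hXc).mono hsub').intervalIntegrable
    have i2 : IntervalIntegrable
        (fun s => (t₀ / (t₀ + s)) • (∫ u, gradient F (X s - u) ∂μ₀)) volume 0 t :=
      (hcg2.mono hsub').intervalIntegrable
    have i3 : IntervalIntegrable (fun s => (1 / (t₀ + s)) •
        (∫ u in (0:ℝ)..s, gradient F (X s - X u))) volume 0 t :=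
      (hcg3.mono hsub').intervalIntegrable
    have hsplit : (∫ s in (0:ℝ)..t, b s)
        = (∫ s in (0:ℝ)..t, gradient V (X s))
          + (∫ s in (0:ℝ)..t, (t₀ / (t₀ + s)) • (∫ u, gradient F (X s - u) ∂μ₀))
          + (∫ s in (0:ℝ)..t, (1 / (t₀ + s)) • (∫ u in (0:ℝ)..s, gradient F (X s - X u))) := by
      have e1 : (fun s => b s) = fun s => gradient V (X s)
          + (t₀ / (t₀ + s)) • (∫ u, gradient F (X s - u) ∂μ₀)
          + (1 / (t₀ + s)) • (∫ u in (0:ℝ)..s, gradient F (X s - X u)) := by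
        funext s; simp only [hbdef, hΦdef, hΨdef]
      rw [show (∫ s in (0:ℝ)..t, b s) = ∫ s in (0:ℝ)..t, (gradient V (X s)
          + (t₀ / (t₀ + s)) • (∫ u, gradient F (X s - u) ∂μ₀)
          + (1 / (t₀ + s)) • (∫ u in (0:ℝ)..s, gradient F (X s - X u))) from by rw [← e1]]
      rw [intervalIntegral.integral_add (i1.add i2) i3, intervalIntegral.integral_add i1 i2]
    rw [hX t ht, hsplit]
    abel
  have hX0 : X 0 = x₀ := by
    have := hX 0 ⟨le_refl 0, hT.le⟩
    simpa using this
  have hderiv : ∀ t ∈ Ioo (0:ℝ) T, HasDerivAt X (-(b t)) t := by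
    intro t ht
    have htI : t ∈ Icc (0:ℝ) T := Ioo_subset_Icc_self ht
    have hint : IntervalIntegrable b volume 0 t :=
      (hbc.mono (uIcc_subset_Icc ⟨le_refl 0, hT.le⟩ htI)).intervalIntegrable
    have hmeas : StronglyMeasurableAtFilter b (nhds t) volume :=
      (hbc.mono Ioo_subset_Icc_self).stronglyMeasurableAtFilter isOpen_Ioo t ht
    have hcont : ContinuousAt b t := hbc.continuousAt (Icc_mem_nhds ht.1 ht.2)
    have hY : HasDerivAt (fun r => ∫ s in (0:ℝ)..r, b s) (b t) t :=
      intervalIntegral.integral_hasDerivAt_right hint hmeas hcont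
    have hY' : HasDerivAt (fun r => x₀ - ∫ s in (0:ℝ)..r, b s) (-(b t)) t := by
      have := (hasDerivAt_const t x₀).sub hY
      rw [zero_sub] at this
      exact this
    refine hY'.congr_of_eventuallyEq ?_
    exact Filter.eventuallyEq_of_mem (Icc_mem_nhds ht.1 ht.2) (fun r hr => hXeq r hr)
  have hmom2a : Integrable (fun z : Ed d => ‖z - a‖ ^ 2) μ₀ := by
    refine ((hμ₀.const_mul 2).add (integrable_const (2 * ‖a‖ ^ 2))).mono'
      ((continuous_id.sub continuous_const).norm.pow 2).aestronglyMeasurable ?_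
    filter_upwards with z
    simp only [Pi.add_apply]
    have h1 : ‖z - a‖ ≤ ‖z‖ + ‖a‖ := norm_sub_le _ _
    have h2 : ‖z - a‖ ^ 2 ≤ (‖z‖ + ‖a‖) ^ 2 := by
      have := pow_le_pow_left₀ (norm_nonneg (z - a)) h1 2
      simpa using this
    have : ‖z - a‖ ^ 2 ≤ 2 * ‖z‖ ^ 2 + 2 * ‖a‖ ^ 2 := by nlinarith [sq_nonneg (‖z‖ - ‖a‖)]
    simpa [abs_of_nonneg (sq_nonneg ‖z - a‖)] using this
  have hattr' : ∀ t ∈ Ioo (0:ℝ) T, K * ‖X t - a‖ ^ 2 ≤ ⟪b t, X t - a⟫ := by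
    intro t ht
    have ht' : t ∈ Icc (0:ℝ) T := Ioo_subset_Icc_self ht
    have h0t : (0:ℝ) < t := ht.1
    have hpos : (0:ℝ) < t₀ + t := by linarith
    have hXae : AEMeasurable X (volume.restrict (Ioc 0 t)) :=
      (hXc.mono ((Ioc_subset_Icc_self).trans (Icc_subset_Icc le_rfl ht'.2))).aemeasurable
        measurableSet_Ioc
    set ν : Measure (Ed d) := Measure.map X (volume.restrict (Ioc 0 t)) with hνdef
    set μt : Measure (Ed d) :=
      ENNReal.ofReal (t₀ / (t₀ + t)) • μ₀ + ENNReal.ofReal (1 / (t₀ + t)) • ν with hμtdef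
    have hc₁ : (0:ℝ) ≤ t₀ / (t₀ + t) := by positivity
    have hc₂ : (0:ℝ) ≤ 1 / (t₀ + t) := by positivity
    have hνuniv : ν univ = ENNReal.ofReal t := by
      rw [hνdef, Measure.map_apply_of_aemeasurable hXae MeasurableSet.univ]
      simp [Real.volume_Ioc]
    have hμtprob : IsProbabilityMeasure μt := by
      constructor
      rw [hμtdef]
      simp only [Measure.coe_add, Measure.coe_smul, Pi.add_apply, Pi.smul_apply,
        smul_eq_mul, hνuniv, measure_univ, mul_one]
      rw [← ENNReal.ofReal_mul hc₂, ← ENNReal.ofReal_add hc₁ (by positivity)]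
      rw [show t₀ / (t₀ + t) + 1 / (t₀ + t) * t = 1 by field_simp]
      exact ENNReal.ofReal_one
    -- second moment
    have hXcT : ContinuousOn X (Icc 0 t) := hXc.mono (Icc_subset_Icc le_rfl ht'.2)
    have hfX2 : IntegrableOn (fun u => ‖X u - a‖ ^ 2) (Ioc 0 t) volume := by
      refine (ContinuousOn.integrableOn_compact isCompact_Icc
        (((hXcT.sub continuousOn_const).norm.pow 2))).mono_set Ioc_subset_Icc_self
    have hmix2 := integral_mix μ₀ X t hXae _ _ hc₁ hc₂
      (fun z => ‖z - a‖ ^ 2) ((continuous_id.sub continuous_const).norm.pow 2)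
      hmom2a hfX2
    have hνint2 : Integrable (fun z : Ed d => ‖z - a‖ ^ 2) ν :=
      (integrable_map_measure
        ((continuous_id.sub continuous_const).norm.pow 2).aestronglyMeasurable hXae).mpr hfX2
    have hμtint2 : Integrable (fun z : Ed d => ‖z - a‖ ^ 2) μt :=
      (hmom2a.smul_measure ENNReal.ofReal_ne_top).add_measure
        (hνint2.smul_measure ENNReal.ofReal_ne_top)
    have hmomle : (∫ z, ‖z - a‖ ^ 2 ∂μt) ≤ Δμ ^ 2 := by
      rw [hμtdef, hmix2]
      have hMt := hM t ht'
      rw [intervalIntegral.integral_of_le h0t.le] at hMt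
      calc (t₀ / (t₀ + t)) • (∫ z, ‖z - a‖ ^ 2 ∂μ₀)
            + (1 / (t₀ + t)) • ∫ u in Ioc (0:ℝ) t, ‖X u - a‖ ^ 2
          = (t₀ * (∫ z, ‖z - a‖ ^ 2 ∂μ₀) + ∫ u in Ioc (0:ℝ) t, ‖X u - a‖ ^ 2) / (t₀ + t) := by
            simp only [smul_eq_mul]; field_simp
        _ ≤ Δμ ^ 2 := hMt
    -- drift decomposition
    have hfXF : IntegrableOn (fun u => gradient F (X t - X u)) (Ioc 0 t) volume := by
      refine (ContinuousOn.integrableOn_compact isCompact_Icc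
        (hgradF_cont.comp_continuousOn (continuousOn_const.sub hXcT))).mono_set
        Ioc_subset_Icc_self
    have hmixF := integral_mix μ₀ X t hXae _ _ hc₁ hc₂
      (fun z => gradient F (X t - z))
      (hgradF_cont.comp (continuous_const.sub continuous_id))
      (hΦint (X t)) hfXF
    have hdrift : (∫ u, gradient F (X t - u) ∂μt)
        = (t₀ / (t₀ + t)) • Φ (X t) + (1 / (t₀ + t)) • Ψ t := by
      rw [hμtdef, hmixF, hΦdef, hΨdef]
      simp only []
      rw [intervalIntegral.integral_of_le h0t.le]
    have hbt : b t = gradient V (X t) + ∫ u, gradient F (X t - u) ∂μt := by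
      rw [hdrift, hbdef]; simp only []; abel
    rw [hbt]
    exact hattr μt hμtprob hμtint2 hmomle (X t) (hball t ht')
  -- Gronwall
  set h : ℝ → ℝ := fun t => ‖X t - a‖ ^ 2 * Real.exp (2 * K * t) with hhdef
  have hg_eq : (fun t => ‖X t - a‖ ^ 2) = fun t => ⟪X t - a, X t - a⟫ := by
    funext t; rw [real_inner_self_eq_norm_sq]
  have hhderiv : ∀ t ∈ Ioo (0:ℝ) T, HasDerivAt h
      ((⟪X t - a, -(b t)⟫ + ⟪-(b t), X t - a⟫) * Real.exp (2 * K * t)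
        + ‖X t - a‖ ^ 2 * (Real.exp (2 * K * t) * (2 * K))) t := by
    intro t ht
    have hXd : HasDerivAt (fun s => X s - a) (-(b t)) t := (hderiv t ht).sub_const a
    have hgd : HasDerivAt (fun t => ‖X t - a‖ ^ 2)
        (⟪X t - a, -(b t)⟫ + ⟪-(b t), X t - a⟫) t := by
      rw [hg_eq]; exact HasDerivAt.inner ℝ hXd hXd
    have hed : HasDerivAt (fun t => Real.exp (2 * K * t))
        (Real.exp (2 * K * t) * (2 * K)) t := by
      have : HasDerivAt (fun t : ℝ => 2 * K * t) (2 * K) t := by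
        simpa using (hasDerivAt_id t).const_mul (2 * K)
      simpa using this.exp
    exact hgd.mul hed
  have hhanti : AntitoneOn h (Icc 0 T) := by
    apply antitoneOn_of_deriv_nonpos (convex_Icc 0 T)
    · exact ((hXc.sub continuousOn_const).norm.pow 2).mul
        (Real.continuous_exp.comp (continuous_const.mul continuous_id)).continuousOn
    · intro t ht
      rw [interior_Icc] at ht
      exact ((hhderiv t ht).differentiableAt).differentiableWithinAt
    · intro t ht
      rw [interior_Icc] at ht
      rw [(hhderiv t ht).deriv]
      have h1 := hattr' t ht
      have h2 : ⟪X t - a, -(b t)⟫ = -⟪b t, X t - a⟫ := by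
        rw [real_inner_comm]; exact inner_neg_left _ _
      have h3 : ⟪-(b t), X t - a⟫ = -⟪b t, X t - a⟫ := inner_neg_left _ _
      rw [h2, h3]
      have he := Real.exp_pos (2 * K * t)
      nlinarith [he]
  intro t ht
  have hht : h t ≤ h 0 := hhanti (by constructor <;> [exact le_refl 0; exact hT.le]) ht ht.1
  have hh0 : h 0 = ‖x₀ - a‖ ^ 2 := by simp [hhdef, hX0]
  rw [hh0] at hht
  have hE : Real.exp (2 * K * t) * Real.exp (-2 * K * t) = 1 := by
    rw [← Real.exp_add]; ring_nf; exact Real.exp_zero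
  have := mul_le_mul_of_nonneg_right hht (Real.exp_pos (-2 * K * t)).le
  calc ‖X t - a‖ ^ 2 = ‖X t - a‖ ^ 2 * (Real.exp (2*K*t) * Real.exp (-2*K*t)) := by
        rw [hE, mul_one]
    _ = h t * Real.exp (-2 * K * t) := by rw [hhdef]; ring
    _ ≤ ‖x₀ - a‖ ^ 2 * Real.exp (-2 * K * t) := this
end
end

section
/- Assume additionally ∇V(a) = 0 and ∇F(0) = 0 for a fixed a ∈ ℝ^d. Fix T > 0, t₀ ∈ (0,∞), R > 0, ρ' > 0, a point x ∈ ℝ^d with |x−a| ≤ R, a probability measure μ₀ with ∫|z−a|² dμ₀(z) ≤ ρ'², and a continuous w : [0,T] → ℝ^d with w(0) = 0. Let X : [0,T] → ℝ^d be the continuous solution of X_t = x − ∫₀ᵗ ∇V(X_s) ds − ∫₀ᵗ (t₀/(t₀+s))·∇F*μ₀(X_s) ds − ∫₀ᵗ (1/(t₀+s))·∫₀ˢ ∇F(X_s−X_u) du ds + w(t). Then for all t ∈ [0,T]: |X_t − x| ≤ (sup_{s∈[0,t]} |w_s| + ((L_V+L_F)·R + L_F·ρ')·t)·exp{(L_V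 + 2L_F)·t + (t₀+t)·log((t₀+t)/t₀) − t}. -/
open MeasureTheory Set

noncomputable section

set_option maxHeartbeats 1000000 in
/-- pathwise Grönwall estimate for the forced generalized
self-interacting dynamics (the forcing path `w` plays the role of the scaled
Brownian path `σW`), used in the control of the dynamics over small time
intervals (Lemma 4.7). -/
theorem stmt12 {d : ℕ} (hd : 1 ≤ d)
    (V F : Ed d → ℝ) (hV : ContDiff ℝ 2 V) (hF : ContDiff ℝ 2 F)
    (LV LF : ℝ) (hLV : 0 ≤ LV) (hLF : 0 ≤ LF)
    (hVlip : ∀ x y : Ed d, ‖gradient V x - gradient V y‖ ≤ LV * ‖x - y‖)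
    (hFlip : ∀ x y : Ed d, ‖gradient F x - gradient F y‖ ≤ LF * ‖x - y‖)
    (a : Ed d) (hVa : gradient V a = 0) (hF0 : gradient F 0 = 0)
    (T : ℝ) (hT : 0 < T) (t₀ : ℝ) (ht₀ : 0 < t₀)
    (R ρ' : ℝ) (hR : 0 < R) (hρ' : 0 < ρ')
    (x : Ed d) (hx : ‖x - a‖ ≤ R)
    (μ₀ : Measure (Ed d)) (hprob : IsProbabilityMeasure μ₀)
    (hμ₀ : Integrable (fun z => ‖z - a‖ ^ 2) μ₀)
    (hμ₀mom : (∫ z, ‖z - a‖ ^ 2 ∂μ₀) ≤ ρ' ^ 2)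
    (w : ℝ → Ed d) (hw : ContinuousOn w (Icc 0 T)) (hw0 : w 0 = 0)
    (X : ℝ → Ed d) (hXc : ContinuousOn X (Icc 0 T))
    (hX : ∀ t ∈ Icc (0:ℝ) T,
      X t = x - (∫ s in (0:ℝ)..t, gradient V (X s))
        - (∫ s in (0:ℝ)..t, (t₀ / (t₀ + s)) • (∫ u, gradient F (X s - u) ∂μ₀))
        - (∫ s in (0:ℝ)..t,
            (1 / (t₀ + s)) • (∫ u in (0:ℝ)..s, gradient F (X s - X u)))
        + w t) :
    ∀ t ∈ Icc (0:ℝ) T,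
      ‖X t - x‖ ≤
        (sSup ((fun s => ‖w s‖) '' Icc 0 t) + ((LV + LF) * R + LF * ρ') * t) *
          Real.exp ((LV + 2 * LF) * t + (t₀ + t) * Real.log ((t₀ + t) / t₀) - t) := by
  intro t ht
  obtain ⟨ht0, htT⟩ := ht
  set K : ℝ := LV + 2 * LF with hKdef
  set C : ℝ := (LV + LF) * R + LF * ρ' with hCdef
  set M : ℝ := sSup ((fun s => ‖w s‖) '' Icc 0 t) with hMdef
  have hK : 0 ≤ K := by simp only [hKdef]; linarith
  have hC : 0 ≤ C := by
    have h1 := mul_nonneg (add_nonneg hLV hLF) hR.le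
    have h2 := mul_nonneg hLF hρ'.le
    simp only [hCdef]; linarith
  -- basic gradient bounds
  have hVb : ∀ y : Ed d, ‖gradient V y‖ ≤ LV * ‖y - a‖ := fun y => by
    simpa [hVa] using hVlip y a
  have hFb : ∀ z : Ed d, ‖gradient F z‖ ≤ LF * ‖z‖ := fun z => by
    simpa [hF0] using hFlip z 0
  -- first moment bound for μ₀
  have hfm : AEStronglyMeasurable (fun z : Ed d => ‖z - a‖) μ₀ :=
    ((continuous_id.sub continuous_const).norm).aestronglyMeasurable
  have hMem : MemLp (fun z : Ed d => ‖z - a‖) 2 μ₀ :=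
    (memLp_two_iff_integrable_sq hfm).2 hμ₀
  have int_norm : Integrable (fun z : Ed d => ‖z - a‖) μ₀ := hMem.integrable one_le_two
  have hmom1 : (∫ z, ‖z - a‖ ∂μ₀) ≤ ρ' := by
    have hvar := ProbabilityTheory.variance_nonneg (fun z : Ed d => ‖z - a‖) μ₀
    rw [ProbabilityTheory.variance_eq_sub hMem] at hvar
    simp only [Pi.pow_apply] at hvar
    have hsq : (∫ z, ‖z - a‖ ∂μ₀) ^ 2 ≤ ρ' ^ 2 := by
      have := hμ₀mom
      linarith
    have h0 : 0 ≤ ∫ z, ‖z - a‖ ∂μ₀ := integral_nonneg fun z => norm_nonneg _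
    nlinarith
  -- sup of the forcing path
  have hwc : ContinuousOn (fun s => ‖w s‖) (Icc 0 t) :=
    (hw.mono (Icc_subset_Icc_right htT)).norm
  have hbddw : BddAbove ((fun s => ‖w s‖) '' Icc 0 t) :=
    (isCompact_Icc.image_of_continuousOn hwc).bddAbove
  have hM0 : 0 ≤ M := by
    have h := le_csSup hbddw ⟨0, ⟨le_rfl, ht0⟩, rfl⟩
    simpa [hw0] using h
  have hwle : ∀ s ∈ Icc (0:ℝ) t, ‖w s‖ ≤ M := fun s hs =>
    le_csSup hbddw ⟨s, hs, rfl⟩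
  -- X 0 = x
  have hX0 : X 0 = x := by
    have h0 := hX 0 ⟨le_rfl, hT.le⟩
    simpa [hw0] using h0
  -- continuity of s ↦ ‖X s - x‖ on [0, t]
  have hφc : ContinuousOn (fun s => ‖X s - x‖) (Icc 0 t) :=
    ((hXc.mono (Icc_subset_Icc_right htT)).sub continuousOn_const).norm
  -- main key estimate
  have key : ∀ ε > 0, ∀ s ∈ Icc (0:ℝ) t,
      ‖X s - x‖ ≤ (M + C * t + ε) * Real.exp (K * s) := by
    intro ε hε
    set B : ℝ → ℝ := fun s => (M + C * t + ε) * Real.exp (K * s) with hBdef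
    have hGnn : 0 ≤ M + C * t + ε := by
      have := mul_nonneg hC ht0
      linarith
    have hBnn : ∀ s, 0 ≤ B s := fun s => mul_nonneg hGnn (Real.exp_nonneg _)
    have hBmono : ∀ u s : ℝ, u ≤ s → B u ≤ B s := by
      intro u s hus
      exact mul_le_mul_of_nonneg_left
        (Real.exp_le_exp.2 (mul_le_mul_of_nonneg_left hus hK)) hGnn
    have hBcont : Continuous B := by fun_prop
    by_contra hcon
    push_neg at hcon
    obtain ⟨b, hbmem, hblt⟩ := hcon
    set Sbad : Set ℝ := {s : ℝ | s ∈ Icc (0:ℝ) t ∧ B s < ‖X s - x‖} with hSdef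
    have hne : Sbad.Nonempty := ⟨b, hbmem, hblt⟩
    have hbdd : BddBelow Sbad := ⟨0, fun s hs => hs.1.1⟩
    set τ := sInf Sbad with hτdef
    have hτ0 : 0 ≤ τ := le_csInf hne fun s hs => hs.1.1
    have hτt : τ ≤ t := by
      obtain ⟨s, hs⟩ := hne
      exact (csInf_le hbdd hs).trans hs.1.2
    have hτT : τ ≤ T := hτt.trans htT
    -- closed sets for limiting arguments
    have hC1 : IsClosed (Icc (0:ℝ) t ∩ (fun s => ‖X s - x‖ - B s) ⁻¹' Iic 0) :=
      (hφc.sub hBcont.continuousOn).preimage_isClosed_of_isClosed isClosed_Icc isClosed_Iic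
    have hC2 : IsClosed (Icc (0:ℝ) t ∩ (fun s => B s - ‖X s - x‖) ⁻¹' Iic 0) :=
      (hBcont.continuousOn.sub hφc).preimage_isClosed_of_isClosed isClosed_Icc isClosed_Iic
    -- below τ the bound holds
    have hlt : ∀ s, 0 ≤ s → s < τ → ‖X s - x‖ ≤ B s := by
      intro s hs0 hsτ
      by_contra hgt
      push_neg at hgt
      have : s ∈ Sbad := ⟨⟨hs0, (hsτ.le.trans hτt)⟩, hgt⟩
      exact absurd (csInf_le hbdd this) (not_le.2 hsτ)
    -- bound holds on the closed interval [0, τ]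
    have hcl : ∀ s ∈ Icc (0:ℝ) τ, ‖X s - x‖ ≤ B s := by
      intro s hs
      rcases lt_or_eq_of_le hs.2 with h | h
      · exact hlt s hs.1 h
      · rw [h]
        rcases eq_or_lt_of_le hτ0 with h0 | h0
        · -- τ = 0
          rw [← h0, hX0]
          simp only [sub_self, norm_zero, hBdef]
          rw [mul_zero, Real.exp_zero, mul_one]
          exact hGnn
        · -- τ > 0 : use continuity from the left
          have hsub : Ico (0:ℝ) τ ⊆ Icc (0:ℝ) t ∩ (fun r => ‖X r - x‖ - B r) ⁻¹' Iic 0 := by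
            intro r hr
            exact ⟨⟨hr.1, (hr.2.le.trans hτt)⟩, by
              simp only [mem_preimage, mem_Iic, sub_nonpos]
              exact hlt r hr.1 hr.2⟩
          have hmem : τ ∈ closure (Ico (0:ℝ) τ) := by
            rw [closure_Ico (ne_of_lt h0)]
            exact ⟨hτ0, le_rfl⟩
          have h6 := ((closure_mono hsub).trans hC1.closure_subset) hmem
          simpa [sub_nonpos] using h6.2
    -- the reverse inequality at τ
    have hge : B τ ≤ ‖X τ - x‖ := by
      have hsub : Sbad ⊆ Icc (0:ℝ) t ∩ (fun r => B r - ‖X r - x‖) ⁻¹' Iic 0 := by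
        intro r hr
        exact ⟨hr.1, by simp only [mem_preimage, mem_Iic, sub_nonpos]; exact hr.2.le⟩
      have hτmem : τ ∈ closure Sbad := csInf_mem_closure hne hbdd
      have := hC2.closure_subset_iff.2 hsub hτmem
      simpa [sub_nonpos] using this.2
    -- now the integral estimate at τ
    have hτIcc : τ ∈ Icc (0:ℝ) T := ⟨hτ0, hτT⟩
    have hden : ∀ s : ℝ, 0 ≤ s → 0 < t₀ + s := fun s hs => by linarith
    -- bound functions
    have hg1i : IntervalIntegrable (fun s => LV * (B s + R)) volume 0 τ := by
      apply Continuous.intervalIntegrable; fun_prop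
    have hdenne : ∀ s ∈ uIcc (0:ℝ) τ, t₀ + s ≠ 0 := by
      intro s hs
      rw [uIcc_of_le hτ0] at hs
      exact ne_of_gt (hden s hs.1)
    have hg2i : IntervalIntegrable (fun s => t₀ / (t₀ + s) * (LF * (B s + R + ρ'))) volume 0 τ := by
      apply ContinuousOn.intervalIntegrable
      exact (continuousOn_const.div (by fun_prop) hdenne).mul (by fun_prop)
    have hg3i : IntervalIntegrable (fun s => s / (t₀ + s) * (2 * LF * B s)) volume 0 τ := by
      apply ContinuousOn.intervalIntegrable
      exact (continuousOn_id.div (by fun_prop) hdenne).mul (by fun_prop)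
    have hgmi : IntervalIntegrable (fun s => C + K * ((M + C * t + ε) * Real.exp (K * s))) volume 0 τ := by
      apply Continuous.intervalIntegrable; fun_prop
    -- norms of the three integrals
    have hI1 : ‖∫ s in (0:ℝ)..τ, gradient V (X s)‖ ≤ ∫ s in (0:ℝ)..τ, LV * (B s + R) := by
      refine (intervalIntegral.norm_integral_le_abs_of_norm_le ?_ hg1i).trans ?_
      · refine (ae_restrict_iff' measurableSet_uIoc).2 (Filter.Eventually.of_forall ?_)
        intro s hs
        rw [uIoc_of_le hτ0] at hs
        have hsIcc : s ∈ Icc (0:ℝ) τ := Ioc_subset_Icc_self hs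
        have h1 : ‖gradient V (X s)‖ ≤ LV * ‖X s - a‖ := hVb _
        have h2 : ‖X s - a‖ ≤ ‖X s - x‖ + R := by
          have : X s - a = (X s - x) + (x - a) := by abel
          rw [this]
          exact (norm_add_le _ _).trans (by linarith [hx])
        have h3 : ‖X s - x‖ ≤ B s := hcl s hsIcc
        calc ‖gradient V (X s)‖ ≤ LV * ‖X s - a‖ := h1
          _ ≤ LV * (B s + R) := mul_le_mul_of_nonneg_left (by linarith) hLV
      · rw [abs_of_nonneg]
        exact intervalIntegral.integral_nonneg hτ0 fun u hu =>
          mul_nonneg hLV (add_nonneg (hBnn u) hR.le)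
    have hI2 : ‖∫ s in (0:ℝ)..τ, (t₀ / (t₀ + s)) • (∫ u, gradient F (X s - u) ∂μ₀)‖
        ≤ ∫ s in (0:ℝ)..τ, t₀ / (t₀ + s) * (LF * (B s + R + ρ')) := by
      refine (intervalIntegral.norm_integral_le_abs_of_norm_le ?_ hg2i).trans ?_
      · refine (ae_restrict_iff' measurableSet_uIoc).2 (Filter.Eventually.of_forall ?_)
        intro s hs
        rw [uIoc_of_le hτ0] at hs
        have hsIcc : s ∈ Icc (0:ℝ) τ := Ioc_subset_Icc_self hs
        have hts : 0 < t₀ + s := hden s hsIcc.1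
        have hBs : ‖X s - x‖ ≤ B s := hcl s hsIcc
        have hIμ : ‖∫ u, gradient F (X s - u) ∂μ₀‖ ≤ LF * (B s + R + ρ') := by
          have hint : Integrable (fun u : Ed d => LF * ((‖X s - x‖ + R) + ‖u - a‖)) μ₀ :=
            ((integrable_const (‖X s - x‖ + R)).add int_norm).const_mul LF
          refine (norm_integral_le_of_norm_le hint (Filter.Eventually.of_forall ?_)).trans ?_
          · intro u
            have h1 : ‖gradient F (X s - u)‖ ≤ LF * ‖X s - u‖ := hFb _
            have h2 : ‖X s - u‖ ≤ ‖X s - x‖ + ‖x - a‖ + ‖u - a‖ := by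
              have he : X s - u = (X s - x) + (x - a) + (a - u) := by abel
              rw [he]
              have := norm_add₃_le (a := X s - x) (b := x - a) (c := a - u)
              rwa [norm_sub_rev a u] at this
            calc ‖gradient F (X s - u)‖ ≤ LF * ‖X s - u‖ := h1
              _ ≤ LF * ((‖X s - x‖ + R) + ‖u - a‖) := by nlinarith [norm_nonneg (X s - u)]
          · rw [integral_const_mul, integral_add (integrable_const _) int_norm,
              integral_const]
            simp only [measure_univ, probReal_univ, ENNReal.toReal_one, smul_eq_mul, one_mul]
            nlinarith [hmom1, hBs]
        rw [norm_smul, Real.norm_eq_abs, abs_of_pos (div_pos ht₀ hts)]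
        exact mul_le_mul_of_nonneg_left hIμ (div_pos ht₀ hts).le
      · rw [abs_of_nonneg]
        exact intervalIntegral.integral_nonneg hτ0 fun u hu => by
          have h1 := hBnn u
          have h2 : 0 < t₀ + u := hden u hu.1
          have h3 : 0 ≤ t₀ / (t₀ + u) := (div_pos ht₀ h2).le
          exact mul_nonneg h3 (mul_nonneg hLF (by linarith))
    have hI3 : ‖∫ s in (0:ℝ)..τ, (1 / (t₀ + s)) • (∫ u in (0:ℝ)..s, gradient F (X s - X u))‖
        ≤ ∫ s in (0:ℝ)..τ, s / (t₀ + s) * (2 * LF * B s) := by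
      refine (intervalIntegral.norm_integral_le_abs_of_norm_le ?_ hg3i).trans ?_
      · refine (ae_restrict_iff' measurableSet_uIoc).2 (Filter.Eventually.of_forall ?_)
        intro s hs
        rw [uIoc_of_le hτ0] at hs
        have hsIcc : s ∈ Icc (0:ℝ) τ := Ioc_subset_Icc_self hs
        have hts : 0 < t₀ + s := hden s hsIcc.1
        have hin : ‖∫ u in (0:ℝ)..s, gradient F (X s - X u)‖ ≤ (2 * LF * B s) * |s - 0| := by
          apply intervalIntegral.norm_integral_le_of_norm_le_const
          intro u hu
          rw [uIoc_of_le hsIcc.1] at hu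
          have huIcc : u ∈ Icc (0:ℝ) τ := ⟨hu.1.le, hu.2.trans hsIcc.2⟩
          have h1 : ‖gradient F (X s - X u)‖ ≤ LF * ‖X s - X u‖ := hFb _
          have h2 : ‖X s - X u‖ ≤ ‖X s - x‖ + ‖X u - x‖ := by
            have he : X s - X u = (X s - x) - (X u - x) := by abel
            rw [he]; exact norm_sub_le _ _
          have h3 : ‖X s - x‖ ≤ B s := hcl s hsIcc
          have h4 : ‖X u - x‖ ≤ B u := hcl u huIcc
          have h5 : B u ≤ B s := hBmono u s (hu.2)
          calc ‖gradient F (X s - X u)‖ ≤ LF * ‖X s - X u‖ := h1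
            _ ≤ 2 * LF * B s := by nlinarith [norm_nonneg (X s - X u)]
        rw [norm_smul, Real.norm_eq_abs, abs_of_pos (by positivity : (0:ℝ) < 1 / (t₀ + s))]
        calc 1 / (t₀ + s) * ‖∫ u in (0:ℝ)..s, gradient F (X s - X u)‖
            ≤ 1 / (t₀ + s) * ((2 * LF * B s) * |s - 0|) := by
              exact mul_le_mul_of_nonneg_left hin (by positivity)
          _ = s / (t₀ + s) * (2 * LF * B s) := by
              rw [sub_zero, abs_of_pos hs.1]; ring
      · rw [abs_of_nonneg]
        exact intervalIntegral.integral_nonneg hτ0 fun u hu => by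
          have h1 := hBnn u
          have h2 : 0 < t₀ + u := hden u hu.1
          have h3 : 0 ≤ u / (t₀ + u) := div_nonneg hu.1 h2.le
          exact mul_nonneg h3 (mul_nonneg (by linarith) h1)
    -- sum of bounds is below the master bound
    have hsum_mono : (∫ s in (0:ℝ)..τ, LV * (B s + R))
        + (∫ s in (0:ℝ)..τ, t₀ / (t₀ + s) * (LF * (B s + R + ρ')))
        + (∫ s in (0:ℝ)..τ, s / (t₀ + s) * (2 * LF * B s))
        ≤ ∫ s in (0:ℝ)..τ, (C + K * ((M + C * t + ε) * Real.exp (K * s))) := by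
      rw [← intervalIntegral.integral_add hg1i hg2i,
        ← intervalIntegral.integral_add (hg1i.add hg2i) hg3i]
      refine intervalIntegral.integral_mono_on hτ0 ((hg1i.add hg2i).add hg3i) hgmi ?_
      intro s hs
      have hts : 0 < t₀ + s := hden s hs.1
      have hp : t₀ / (t₀ + s) ≤ 1 := by
        rw [div_le_one hts]; linarith [hs.1]
      have hp0 : 0 ≤ t₀ / (t₀ + s) := (div_pos ht₀ hts).le
      have hq : s / (t₀ + s) ≤ 1 := by
        rw [div_le_one hts]; linarith
      have hq0 : 0 ≤ s / (t₀ + s) := div_nonneg hs.1 hts.le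
      have hpq : t₀ / (t₀ + s) + s / (t₀ + s) = 1 := by
        field_simp
      have hBs := hBnn s
      have hBe : (M + C * t + ε) * Real.exp (K * s) = B s := rfl
      rw [hBe, hKdef, hCdef]
      have hint1 : 0 ≤ LF * (R + ρ') * (1 - t₀ / (t₀ + s)) :=
        mul_nonneg (mul_nonneg hLF (add_nonneg hR.le hρ'.le)) (by linarith)
      have hint2 : 0 ≤ LF * B s * (t₀ / (t₀ + s)) :=
        mul_nonneg (mul_nonneg hLF hBs) hp0
      have hint3 : LF * B s * (t₀ / (t₀ + s)) + LF * B s * (s / (t₀ + s)) = LF * B s := by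
        rw [← mul_add, hpq, mul_one]
      nlinarith [hint1, hint2, hint3]
    -- value of the master integral
    have hexp : (∫ s in (0:ℝ)..τ, K * Real.exp (K * s))
        = Real.exp (K * τ) - 1 := by
      have hd : ∀ s ∈ uIcc (0:ℝ) τ, HasDerivAt (fun r => Real.exp (K * r))
          (K * Real.exp (K * s)) s := by
        intro s _
        simpa [mul_comm] using (((hasDerivAt_id s).const_mul K).exp)
      have hint : IntervalIntegrable (fun s => K * Real.exp (K * s)) volume 0 τ := by
        apply Continuous.intervalIntegrable; fun_prop
      rw [intervalIntegral.integral_eq_sub_of_hasDerivAt hd hint]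
      simp
    have hgm_val : (∫ s in (0:ℝ)..τ, (C + K * ((M + C * t + ε) * Real.exp (K * s))))
        = C * τ + (M + C * t + ε) * (Real.exp (K * τ) - 1) := by
      have h1 : IntervalIntegrable (fun _ : ℝ => C) volume 0 τ := intervalIntegrable_const
      have h2 : IntervalIntegrable (fun s => K * ((M + C * t + ε) * Real.exp (K * s)))
          volume 0 τ := by apply Continuous.intervalIntegrable; fun_prop
      have : (∫ s in (0:ℝ)..τ, (C + K * ((M + C * t + ε) * Real.exp (K * s))))
          = (∫ _ in (0:ℝ)..τ, C) + ∫ s in (0:ℝ)..τ, K * ((M + C * t + ε) * Real.exp (K * s)) := by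
        rw [← intervalIntegral.integral_add h1 h2]
      rw [this, intervalIntegral.integral_const]
      have : (∫ s in (0:ℝ)..τ, K * ((M + C * t + ε) * Real.exp (K * s)))
          = (M + C * t + ε) * ∫ s in (0:ℝ)..τ, K * Real.exp (K * s) := by
        rw [← intervalIntegral.integral_const_mul]
        apply intervalIntegral.integral_congr
        intro s _
        ring
      rw [this, hexp]
      simp only [sub_zero, smul_eq_mul]
      ring
    -- assemble
    have hXτ : X τ - x = w τ - (∫ s in (0:ℝ)..τ, gradient V (X s))
        - (∫ s in (0:ℝ)..τ, (t₀ / (t₀ + s)) • (∫ u, gradient F (X s - u) ∂μ₀))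
        - (∫ s in (0:ℝ)..τ, (1 / (t₀ + s)) • (∫ u in (0:ℝ)..s, gradient F (X s - X u))) := by
      rw [hX τ hτIcc]; abel
    have htri : ‖X τ - x‖ ≤ ‖w τ‖ + (‖∫ s in (0:ℝ)..τ, gradient V (X s)‖
        + ‖∫ s in (0:ℝ)..τ, (t₀ / (t₀ + s)) • (∫ u, gradient F (X s - u) ∂μ₀)‖
        + ‖∫ s in (0:ℝ)..τ, (1 / (t₀ + s)) • (∫ u in (0:ℝ)..s, gradient F (X s - X u))‖) := by
      rw [hXτ]
      have n1 := norm_sub_le (w τ - (∫ s in (0:ℝ)..τ, gradient V (X s))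
        - (∫ s in (0:ℝ)..τ, (t₀ / (t₀ + s)) • (∫ u, gradient F (X s - u) ∂μ₀)))
        (∫ s in (0:ℝ)..τ, (1 / (t₀ + s)) • (∫ u in (0:ℝ)..s, gradient F (X s - X u)))
      have n2 := norm_sub_le (w τ - (∫ s in (0:ℝ)..τ, gradient V (X s)))
        (∫ s in (0:ℝ)..τ, (t₀ / (t₀ + s)) • (∫ u, gradient F (X s - u) ∂μ₀))
      have n3 := norm_sub_le (w τ) (∫ s in (0:ℝ)..τ, gradient V (X s))
      linarith
    have hwτ : ‖w τ‖ ≤ M := hwle τ ⟨hτ0, hτt⟩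
    have hfinal : ‖X τ - x‖ ≤ M + C * τ + (M + C * t + ε) * (Real.exp (K * τ) - 1) := by
      have := hsum_mono
      rw [hgm_val] at this
      linarith
    -- contradiction
    have hBτ : B τ = (M + C * t + ε) * Real.exp (K * τ) := rfl
    have hCτ : C * τ ≤ C * t := mul_le_mul_of_nonneg_left hτt hC
    rw [hBτ] at hge
    nlinarith
  -- pass to the limit ε → 0
  have hlim : ‖X t - x‖ ≤ (M + C * t) * Real.exp (K * t) := by
    refine le_of_forall_pos_le_add fun ε' hε' => ?_
    have hexpos : (0:ℝ) < Real.exp (K * t) := Real.exp_pos _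
    have h := key (ε' / Real.exp (K * t)) (by positivity) t ⟨ht0, le_rfl⟩
    calc ‖X t - x‖ ≤ (M + C * t + ε' / Real.exp (K * t)) * Real.exp (K * t) := h
      _ = (M + C * t) * Real.exp (K * t) + ε' := by
          rw [add_mul, div_mul_cancel₀ _ (ne_of_gt hexpos)]
  -- compare exponents
  have hD : t ≤ (t₀ + t) * Real.log ((t₀ + t) / t₀) := by
    have hpos : 0 < t₀ + t := by linarith
    have h1 : Real.log (t₀ / (t₀ + t)) ≤ t₀ / (t₀ + t) - 1 :=
      Real.log_le_sub_one_of_pos (by positivity)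
    have h2 : Real.log (t₀ / (t₀ + t)) = -Real.log ((t₀ + t) / t₀) := by
      rw [← Real.log_inv, inv_div]
    rw [h2] at h1
    have h3 : t / (t₀ + t) ≤ Real.log ((t₀ + t) / t₀) := by
      have : t₀ / (t₀ + t) - 1 = -(t / (t₀ + t)) := by
        field_simp
        ring
      rw [this] at h1
      linarith
    calc t = (t₀ + t) * (t / (t₀ + t)) := by field_simp
      _ ≤ (t₀ + t) * Real.log ((t₀ + t) / t₀) :=
          mul_le_mul_of_nonneg_left h3 hpos.le
  have hMCt : 0 ≤ M + C * t := by
    have := mul_nonneg hC ht0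
    linarith
  calc ‖X t - x‖ ≤ (M + C * t) * Real.exp (K * t) := hlim
    _ ≤ (M + C * t) * Real.exp (K * t + (t₀ + t) * Real.log ((t₀ + t) / t₀) - t) := by
        refine mul_le_mul_of_nonneg_left (Real.exp_le_exp.2 ?_) hMCt
        linarith
end
end
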